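/- arXiv:1301.0497 — 4 statements merged into one kernel-verified Lean document; each statement's English description precedes it below -/
import Mathlib

section
/- Let π be an irreducible finite-dimensional ℂ[J]-module with character χ_π. If r_{U,V}π = 0, then for every l ∈ L one has |U|⁻¹|V|⁻¹ ∑_{u∈U} ∑_{v∈V} χ_π(u·l·v) = 0. Otherwise ρ := r_{U,V}π is an irreducible ℂ[L]-module and for every l ∈ L one has |U|⁻¹|V|⁻¹ ∑_{u∈U} ∑_{v∈V} χ_π(u·l·v) = (dim ρ / dim π) · χ_ρ(l), where χ_ρ is the character of ρ. -/
open scoped BigOperators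

set_option maxHeartbeats 1000000
set_option synthInstance.maxHeartbeats 1000000

noncomputable section

namespace Parahoric

variable {G : Type*} [Group G]

/-- An Iwahori decomposition of the subgroup `I` of `G` as `I = W·M·W̄`:
`M` normalizes `W` and `W̄`, and the multiplication map `W × M × W̄ → I` is a bijection. -/
def IwahoriDecomp (I W M Wb : Subgroup G) : Prop :=
  M ≤ Subgroup.normalizer (W : Set G) ∧ M ≤ Subgroup.normalizer (Wb : Set G) ∧
    Set.BijOn (fun q : G × G × G => q.1 * q.2.1 * q.2.2)
      ((W : Set G) ×ˢ (M : Set G) ×ˢ (Wb : Set G)) (I : Set G)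

/-- The averaging idempotent `e_H = |H|⁻¹ ∑_{h ∈ H} h` in the group algebra `ℂ[G]`. -/
def algAvg (H : Subgroup G) [Finite H] : MonoidAlgebra ℂ G :=
  letI : Fintype H := Fintype.ofFinite H
  (Nat.card H : ℂ)⁻¹ • ∑ h : H, MonoidAlgebra.of ℂ G (h : G)

/-- The canonical algebra embedding `ℂ[L] → ℂ[G]` for a subgroup `L ≤ G`. -/
def algMap (L : Subgroup G) : MonoidAlgebra ℂ ↥L →ₐ[ℂ] MonoidAlgebra ℂ G :=
  MonoidAlgebra.mapDomainAlgHom ℂ ℂ L.subtype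

/-- `ℂ[G]·e`, the range of right multiplication by `e` on the group algebra. -/
def ralg (G : Type*) [Group G] (e : MonoidAlgebra ℂ G) : Submodule ℂ (MonoidAlgebra ℂ G) :=
  LinearMap.range (LinearMap.mulRight ℂ e)

section Reps

variable {W W₁ W₂ : Type*} [AddCommGroup W] [Module ℂ W]
  [AddCommGroup W₁] [Module ℂ W₁] [AddCommGroup W₂] [Module ℂ W₂]

/-- A ℂ-submodule is stable under a representation. -/
def Stable (π : Representation ℂ G W) (S : Submodule ℂ W) : Prop :=
  ∀ g : G, ∀ x ∈ S, π g x ∈ S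

/-- Irreducibility of a representation (equivalently, simplicity of the corresponding
`ℂ[G]`-module): the space is nonzero and has no nontrivial invariant subspaces. -/
def IsIrreducible (π : Representation ℂ G W) : Prop :=
  (⊤ : Submodule ℂ W) ≠ ⊥ ∧
    ∀ T : Submodule ℂ W, Stable π T → T = ⊥ ∨ T = ⊤

/-- Irreducibility of an invariant subspace `S` of an ambient representation. -/
def IsIrreducibleSub (π : Representation ℂ G W) (S : Submodule ℂ W) : Prop :=
  S ≠ ⊥ ∧ ∀ T : Submodule ℂ W, T ≤ S → Stable π T → T = ⊥ ∨ T = S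

/-- The space `Hom_G(ρ, τ)` of intertwining operators. -/
def repHom (ρ : Representation ℂ G W₁) (τ : Representation ℂ G W₂) :
    Submodule ℂ (W₁ →ₗ[ℂ] W₂) where
  carrier := {φ | ∀ (g : G) (x : W₁), φ (ρ g x) = τ g (φ x)}
  add_mem' := by
    intro φ ψ hφ hψ g x
    simp [hφ g x, hψ g x]
  zero_mem' := by intro g x; simp
  smul_mem' := by
    intro c φ hφ g x
    simp [hφ g x]

/-- `Hom_G(ρ, τ|_T)` where the target is an invariant subspace `T` of `τ`. -/
def homFullSub (ρ : Representation ℂ G W₁) (τ : Representation ℂ G W₂)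
    (T : Submodule ℂ W₂) : Submodule ℂ (W₁ →ₗ[ℂ] ↥T) where
  carrier := {φ | ∀ (g : G) (x : W₁), (φ (ρ g x) : W₂) = τ g ↑(φ x)}
  add_mem' := by
    intro φ ψ hφ hψ g x
    simp [hφ g x, hψ g x]
  zero_mem' := by intro g x; simp
  smul_mem' := by
    intro c φ hφ g x
    simp [hφ g x]

/-- `Hom_G(ρ|_S, τ)` where the source is an invariant subspace `S` of `ρ`. -/
def homSubFull (ρ : Representation ℂ G W₁) (S : Submodule ℂ W₁)
    (τ : Representation ℂ G W₂) : Submodule ℂ (↥S →ₗ[ℂ] W₂) where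
  carrier := {φ | ∀ (g : G) (x : S) (hx : ρ g ↑x ∈ S), φ ⟨ρ g ↑x, hx⟩ = τ g (φ x)}
  add_mem' := by
    intro φ ψ hφ hψ g x hx
    simp [hφ g x hx, hψ g x hx]
  zero_mem' := by intro g x hx; simp
  smul_mem' := by
    intro c φ hφ g x hx
    simp [hφ g x hx]

/-- `Hom_G(ρ|_S, τ|_T)` between invariant subspaces. -/
def homSubSub (ρ : Representation ℂ G W₁) (S : Submodule ℂ W₁)
    (τ : Representation ℂ G W₂) (T : Submodule ℂ W₂) : Submodule ℂ (↥S →ₗ[ℂ] ↥T) where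
  carrier := {φ | ∀ (g : G) (x : S) (hx : ρ g ↑x ∈ S), (φ ⟨ρ g ↑x, hx⟩ : W₂) = τ g ↑(φ x)}
  add_mem' := by
    intro φ ψ hφ hψ g x hx
    simp [hφ g x hx, hψ g x hx]
  zero_mem' := by intro g x hx; simp
  smul_mem' := by
    intro c φ hφ g x hx
    simp [hφ g x hx]

/-- Isomorphism of representations. -/
def IsoRep (ρ : Representation ℂ G W₁) (τ : Representation ℂ G W₂) : Prop :=
  ∃ e : W₁ ≃ₗ[ℂ] W₂, ∀ (g : G) (x : W₁), e (ρ g x) = τ g (e x)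

/-- Equivariant isomorphism from a representation onto an invariant subspace. -/
def IsoFullSub (ρ : Representation ℂ G W₁) (τ : Representation ℂ G W₂)
    (T : Submodule ℂ W₂) : Prop :=
  ∃ e : W₁ ≃ₗ[ℂ] ↥T, ∀ (g : G) (x : W₁), (e (ρ g x) : W₂) = τ g ↑(e x)

/-- Equivariant isomorphism from an invariant subspace onto a representation. -/
def IsoSubFull (ρ : Representation ℂ G W₁) (S : Submodule ℂ W₁)
    (τ : Representation ℂ G W₂) : Prop :=
  ∃ e : ↥S ≃ₗ[ℂ] W₂, ∀ (g : G) (x : S) (hx : ρ g ↑x ∈ S), e ⟨ρ g ↑x, hx⟩ = τ g (e x)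

/-- Equivariant isomorphism between invariant subspaces. -/
def IsoSubSub (ρ : Representation ℂ G W₁) (S : Submodule ℂ W₁)
    (τ : Representation ℂ G W₂) (T : Submodule ℂ W₂) : Prop :=
  ∃ e : ↥S ≃ₗ[ℂ] ↥T, ∀ (g : G) (x : S) (hx : ρ g ↑x ∈ S),
    (e ⟨ρ g ↑x, hx⟩ : W₂) = τ g ↑(e x)

/-- The operator `π(e_H) = |H|⁻¹ ∑_{h ∈ H} π(h)`. -/
def avgMap (π : Representation ℂ G W) (H : Subgroup G) [Finite H] : W →ₗ[ℂ] W :=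
  letI : Fintype H := Fintype.ofFinite H
  (Nat.card H : ℂ)⁻¹ • ∑ h : H, π (h : G)

/-- The subspace `W^H` of `H`-fixed vectors. -/
def fixedSub (π : Representation ℂ G W) (H : Subgroup G) : Submodule ℂ W where
  carrier := {w | ∀ h ∈ H, π h w = w}
  add_mem' := by
    intro a b ha hb h hh
    simp [ha h hh, hb h hh]
  zero_mem' := by intro h hh; simp
  smul_mem' := by
    intro c a ha h hh
    simp [ha h hh]

/-- Restriction of a representation to a subgroup. -/
def resRep (π : Representation ℂ G W) (L : Subgroup G) : Representation ℂ ↥L W :=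
  π.comp L.subtype

/-- The right-translation representation of `G` on the function space `G → W`. -/
def rtRep (G : Type*) [Group G] (W : Type*) [AddCommGroup W] [Module ℂ W] :
    Representation ℂ G (G → W) where
  toFun g :=
    { toFun := fun f x => f (x * g)
      map_add' := fun _ _ => rfl
      map_smul' := fun _ _ => rfl }
  map_one' := LinearMap.ext fun f => funext fun x => by simp
  map_mul' := fun g₁ g₂ => LinearMap.ext fun f => funext fun x => by
    simp [mul_assoc]

/-- The left-translation representation of `G` on the function space `G → W`. -/
def ltRep (G : Type*) [Group G] (W : Type*) [AddCommGroup W] [Module ℂ W] :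
    Representation ℂ G (G → W) where
  toFun g :=
    { toFun := fun f x => f (g⁻¹ * x)
      map_add' := fun _ _ => rfl
      map_smul' := fun _ _ => rfl }
  map_one' := LinearMap.ext fun f => funext fun x => by simp
  map_mul' := fun g₁ g₂ => LinearMap.ext fun f => funext fun x => by
    simp [mul_assoc]

/-- Left translation by a fixed group element, as a linear operator on `G → W`. -/
def lTrans (W : Type*) [AddCommGroup W] [Module ℂ W] (g : G) : (G → W) →ₗ[ℂ] (G → W) where
  toFun f := fun x => f (g * x)
  map_add' := fun _ _ => rfl
  map_smul' := fun _ _ => rfl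

/-- The averaging operator `I_U : f ↦ (j ↦ |U|⁻¹ ∑_{u ∈ U} f(u·j))` on `G → W`. -/
def avgL (U : Subgroup G) [Finite U] (W : Type*) [AddCommGroup W] [Module ℂ W] :
    (G → W) →ₗ[ℂ] (G → W) :=
  letI : Fintype U := Fintype.ofFinite U
  (Nat.card U : ℂ)⁻¹ • ∑ u : U, lTrans W (u : G)

/-- The module `Ind_{LU}^G (infl_L^{LU} ρ)` of functions `f : G → W` with
`f(u·l·g) = ρ(l)·f(g)` for `u ∈ U`, `l ∈ L`; `G` acts by right translation (`rtRep`).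
This is the standard concrete model of `ℂ[G]·e_U ⊗_{ℂ[L]} ρ`. -/
def indInfl (U L : Subgroup G) {W : Type*} [AddCommGroup W] [Module ℂ W]
    (ρ : Representation ℂ ↥L W) : Submodule ℂ (G → W) where
  carrier := {f | ∀ (u l g : G) (hu : u ∈ U) (hl : l ∈ L),
    f (u * l * g) = ρ ⟨l, hl⟩ (f g)}
  add_mem' := by
    intro f₁ f₂ h₁ h₂ u l g hu hl
    simp [h₁ u l g hu hl, h₂ u l g hu hl]
  zero_mem' := by intro u l g hu hl; simp
  smul_mem' := by
    intro c f hf u l g hu hl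
    simp [hf u l g hu hl]

/-- Parahoric induction `i_{U,V} ρ = ℂ[G]e_V e_U ⊗_{ℂ[L]} ρ`, realized concretely as the
image of the averaging operator `I_U` on `Ind_{LV}^G (infl ρ)`; `G` acts by `rtRep`. -/
def parInd (U L V : Subgroup G) [Finite U] {W : Type*} [AddCommGroup W] [Module ℂ W]
    (ρ : Representation ℂ ↥L W) : Submodule ℂ (G → W) :=
  (indInfl V L ρ).map (avgL U W)

/-- Parahoric restriction `r_{U,V} π`: the image of the operator `π(e_U)·π(e_V)`. -/
def parRes (π : Representation ℂ G W) (U V : Subgroup G) [Finite U] [Finite V] :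
    Submodule ℂ W :=
  LinearMap.range (avgMap π U ∘ₗ avgMap π V)

/-- Conjugation `l ↦ w·l·w⁻¹` as an endomorphism of a subgroup `L` normalized by `w`. -/
def conjHom (L : Subgroup G) (w : G) (hw : ∀ l ∈ L, w * l * w⁻¹ ∈ L) : ↥L →* ↥L where
  toFun l := ⟨w * ↑l * w⁻¹, hw ↑l l.2⟩
  map_one' := by ext; simp
  map_mul' := fun a b => by ext; simp [mul_assoc]

/-- External direct sum of two representations of the same group. -/
def pairRep (ρ : Representation ℂ G W₁) (τ : Representation ℂ G W₂) :
    Representation ℂ G (W₁ × W₂) where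
  toFun g := (ρ g).prodMap (τ g)
  map_one' := by ext x <;> simp
  map_mul' := fun g₁ g₂ => by ext x <;> simp

/-- The induced module `ℂ[G] ⊗_{ℂ[J]} W` (for `J ≤ G` of finite index this is all of the
induced module; in general, its "compactly induced" variant is `cInd`): functions
`f : G → W` with `f(g·j) = π(j)⁻¹ f(g)`, the action of `G` being left translation. -/
def indUp (J : Subgroup G) {W : Type*} [AddCommGroup W] [Module ℂ W]
    (π : Representation ℂ ↥J W) : Submodule ℂ (G → W) where
  carrier := {f | ∀ (g : G) (j : ↥J), f (g * ↑j) = π j⁻¹ (f g)}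
  add_mem' := by
    intro f₁ f₂ h₁ h₂ g j
    simp [h₁ g j, h₂ g j]
  zero_mem' := by intro g j; simp
  smul_mem' := by
    intro c f hf g j
    simp [hf g j]

/-- The induced module `ℂ[G] ⊗_{ℂ[J]} W` for an arbitrary subgroup `J` of a (possibly
infinite) group `G`: functions `f : G → W` with `f(g·j) = π(j)⁻¹ f(g)` supported on
finitely many cosets `g·J`; the action of `G` is left translation (`ltRep`). -/
def cInd (J : Subgroup G) {W : Type*} [AddCommGroup W] [Module ℂ W]
    (π : Representation ℂ ↥J W) : Submodule ℂ (G → W) where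
  carrier := {f | (∀ (g : G) (j : ↥J), f (g * ↑j) = π j⁻¹ (f g)) ∧
    ∃ S : Set G, S.Finite ∧ ∀ g : G, f g ≠ 0 → ∃ s ∈ S, ∃ j : ↥J, g = s * ↑j}
  add_mem' := by
    rintro f₁ f₂ ⟨h₁, S₁, hS₁, hS₁'⟩ ⟨h₂, S₂, hS₂, hS₂'⟩
    refine ⟨fun g j => by simp [h₁ g j, h₂ g j], S₁ ∪ S₂, hS₁.union hS₂, fun g hg => ?_⟩
    by_cases hf₁ : f₁ g = 0
    · have hf₂ : f₂ g ≠ 0 := by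
        intro h
        exact hg (by simp [Pi.add_apply, hf₁, h])
      obtain ⟨s, hs, j, hj⟩ := hS₂' g hf₂
      exact ⟨s, Set.mem_union_right _ hs, j, hj⟩
    · obtain ⟨s, hs, j, hj⟩ := hS₁' g hf₁
      exact ⟨s, Set.mem_union_left _ hs, j, hj⟩
  zero_mem' := by
    refine ⟨fun g j => by simp, ∅, Set.finite_empty, fun g hg => absurd rfl hg⟩
  smul_mem' := by
    rintro c f ⟨h, S, hS, hS'⟩
    refine ⟨fun g j => by simp [h g j], S, hS, fun g hg => ?_⟩
    apply hS'
    intro h0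
    exact hg (by simp [Pi.smul_apply, h0])

/-- The space of functions `f : J → ℂ` with `f(b·g) = χ(b)·f(g)`: the concrete model of the
induced representation `Ind_B^J χ` of a one-dimensional character, `J` acting by `rtRep`. -/
def indChar {J : Type*} [Group J] (B : Subgroup J) (χ : ↥B →* ℂˣ) :
    Submodule ℂ (J → ℂ) where
  carrier := {f | ∀ (b : ↥B) (g : J), f (↑b * g) = (χ b : ℂ) * f g}
  add_mem' := by
    intro f₁ f₂ h₁ h₂ b g
    simp [h₁ b g, h₂ b g, mul_add]
  zero_mem' := by intro b g; simp
  smul_mem' := by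
    intro c f hf b g
    simp [hf b g]
    ring

/-- The space `Hom_{J ∩ t⁻¹Jt}(π, π^t)` of linear maps `φ` with
`φ ∘ π(x) = π(t·x·t⁻¹) ∘ φ` for all `x ∈ J ∩ t⁻¹Jt`. -/
def twistedIntertwiners {W : Type*} [AddCommGroup W] [Module ℂ W]
    (J : Subgroup G) (π : Representation ℂ ↥J W) (t : G) :
    Submodule ℂ (W →ₗ[ℂ] W) where
  carrier := {φ | ∀ (x : G) (hx : x ∈ J) (hx' : t * x * t⁻¹ ∈ J),
    φ ∘ₗ π ⟨x, hx⟩ = π ⟨t * x * t⁻¹, hx'⟩ ∘ₗ φ}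
  add_mem' := by
    intro φ ψ hφ hψ x hx hx'
    simp only [LinearMap.add_comp, LinearMap.comp_add, hφ x hx hx', hψ x hx hx']
  zero_mem' := by intro x hx hx'; simp
  smul_mem' := by
    intro c φ hφ x hx hx'
    simp only [LinearMap.smul_comp, LinearMap.comp_smul, hφ x hx hx']

/-- The dimension `dim_ℂ S` of a subspace `S` (e.g. of a space of intertwining maps). -/
def dimC {M : Type*} [AddCommGroup M] [Module ℂ M] (S : Submodule ℂ M) : ℕ :=
  Module.finrank ℂ ↥S

/-- Finite-dimensionality of a subspace over `ℂ`. -/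
def IsFinDimSub {M : Type*} [AddCommGroup M] [Module ℂ M] (S : Submodule ℂ M) : Prop :=
  FiniteDimensional ℂ ↥S

end Reps


section AuxNine

open LinearMap

variable {J : Type*} [Group J]
variable {W : Type*} [AddCommGroup W] [Module ℂ W]

lemma avgMap_eq_smul_sum (π : Representation ℂ J W) (H : Subgroup J) [Fintype ↥H] :
    avgMap π H = (Fintype.card ↥H : ℂ)⁻¹ • ∑ h : ↥H, π (h : J) := by
  have : Fintype.ofFinite ↥H = ‹Fintype ↥H› := Subsingleton.elim _ _
  rw [avgMap, this, Nat.card_eq_fintype_card]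

lemma card_coe_ne_zero (H : Subgroup J) [Fintype ↥H] : (Fintype.card ↥H : ℂ) ≠ 0 := by
  exact_mod_cast Fintype.card_ne_zero

lemma rep_mul_avgMap (π : Representation ℂ J W) {H : Subgroup J} [Fintype ↥H] {h : J}
    (hh : h ∈ H) : (π h : Module.End ℂ W) * avgMap π H = avgMap π H := by
  rw [avgMap_eq_smul_sum]
  rw [mul_smul_comm, Finset.mul_sum]
  congr 1
  refine Fintype.sum_bijective (fun k : ↥H => (⟨h, hh⟩ : ↥H) * k)
    (Group.mulLeft_bijective _) _ _ (fun k => ?_)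
  rw [← map_mul]
  rfl

lemma avgMap_mul_rep (π : Representation ℂ J W) {H : Subgroup J} [Fintype ↥H] {h : J}
    (hh : h ∈ H) : avgMap π H * (π h : Module.End ℂ W) = avgMap π H := by
  rw [avgMap_eq_smul_sum]
  rw [smul_mul_assoc, Finset.sum_mul]
  congr 1
  refine Fintype.sum_bijective (fun k : ↥H => k * (⟨h, hh⟩ : ↥H))
    (Group.mulRight_bijective _) _ _ (fun k => ?_)
  rw [← map_mul]
  rfl

lemma avgMap_idem (π : Representation ℂ J W) (H : Subgroup J) [Fintype ↥H] :
    avgMap π H * avgMap π H = avgMap π H := by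
  nth_rewrite 1 [avgMap_eq_smul_sum]
  rw [smul_mul_assoc, Finset.sum_mul]
  have : ∀ k : ↥H, (π (k : J) : Module.End ℂ W) * avgMap π H = avgMap π H :=
    fun k => rep_mul_avgMap π k.2
  rw [Finset.sum_congr rfl (fun k _ => this k), Finset.sum_const, Finset.card_univ,
    ← Nat.cast_smul_eq_nsmul ℂ, smul_smul, inv_mul_cancel₀ (card_coe_ne_zero H), one_smul]

lemma rep_comm_avgMap (π : Representation ℂ J W) {H : Subgroup J} [Fintype ↥H] {l : J}
    (hl : l ∈ Subgroup.normalizer (H : Set J)) :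
    (π l : Module.End ℂ W) * avgMap π H = avgMap π H * π l := by
  rw [avgMap_eq_smul_sum, mul_smul_comm, smul_mul_assoc, Finset.mul_sum, Finset.sum_mul]
  congr 1
  have hmem : ∀ k : ↥H, l * (k : J) * l⁻¹ ∈ H := fun k =>
    (Subgroup.mem_normalizer_iff.mp hl (k : J)).mp k.2
  refine Fintype.sum_bijective (fun k : ↥H => (⟨l * (k : J) * l⁻¹, hmem k⟩ : ↥H)) ?_ _ _ ?_
  · constructor
    · intro a b hab
      have : l * (a : J) * l⁻¹ = l * (b : J) * l⁻¹ := congrArg Subtype.val hab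
      ext
      exact mul_left_cancel (mul_right_cancel this)
    · intro k
      have hk : l⁻¹ * (k : J) * l ∈ H := by
        have := (Subgroup.mem_normalizer_iff.mp hl (l⁻¹ * (k : J) * l)).mpr
        apply this
        group
        exact k.2
      exact ⟨⟨l⁻¹ * (k : J) * l, hk⟩, by ext; group⟩
  · intro k
    show (π l) * (π (k : J)) = (π (l * k * l⁻¹)) * (π l)
    rw [← map_mul, ← map_mul]
    congr 1
    group

lemma sum_rep_conj (π : Representation ℂ J W) {H : Subgroup J} [Fintype ↥H] {l : J}
    (hl : l ∈ Subgroup.normalizer (H : Set J)) :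
    ∑ k : ↥H, (π (l * (k : J) * l⁻¹) : Module.End ℂ W) = ∑ k : ↥H, π (k : J) := by
  have hmem : ∀ k : ↥H, l * (k : J) * l⁻¹ ∈ H := fun k =>
    (Subgroup.mem_normalizer_iff.mp hl (k : J)).mp k.2
  refine Fintype.sum_bijective (fun k : ↥H => (⟨l * (k : J) * l⁻¹, hmem k⟩ : ↥H)) ?_ _ _ ?_
  · constructor
    · intro a b hab
      have : l * (a : J) * l⁻¹ = l * (b : J) * l⁻¹ := congrArg Subtype.val hab
      ext
      exact mul_left_cancel (mul_right_cancel this)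
    · intro k
      have hk : l⁻¹ * (k : J) * l ∈ H := by
        have := (Subgroup.mem_normalizer_iff.mp hl (l⁻¹ * (k : J) * l)).mpr
        apply this
        group
        exact k.2
      exact ⟨⟨l⁻¹ * (k : J) * l, hk⟩, by ext; group⟩
  · intro k; rfl

section Irred

variable [FiniteDimensional ℂ W]

omit [FiniteDimensional ℂ W] in
lemma nontrivial_of_irr (π : Representation ℂ J W) (hπ : IsIrreducible π) : Nontrivial W := by
  by_contra h
  rw [not_nontrivial_iff_subsingleton] at h
  exact hπ.1 (Subsingleton.elim _ _)

lemma schur_scalar (π : Representation ℂ J W) (hπ : IsIrreducible π) (T : Module.End ℂ W)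
    (hT : ∀ g : J, (π g : Module.End ℂ W) * T = T * π g) :
    T = ((LinearMap.trace ℂ W T) / (Module.finrank ℂ W : ℂ)) • 1 := by
  haveI := nontrivial_of_irr π hπ
  obtain ⟨c, hc⟩ := Module.End.exists_eigenvalue T
  have heig : ∀ x : W, T x = c • x := by
    have hstab : Stable π (T.eigenspace c) := by
      intro g x hx
      rw [Module.End.mem_eigenspace_iff] at hx ⊢
      have : T (π g x) = π g (T x) := by
        have := hT g
        have := congrArg (fun S : Module.End ℂ W => S x) this
        simpa using this.symm
      rw [this, hx, map_smul]
    rcases hπ.2 _ hstab with h | h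
    · exact absurd h hc
    · intro x
      have : x ∈ Module.End.eigenspace T c := h ▸ Submodule.mem_top
      exact Module.End.mem_eigenspace_iff.mp this
  have hT : T = c • 1 := by
    ext x; simpa using heig x
  have htr : LinearMap.trace ℂ W T = c * Module.finrank ℂ W := by
    rw [hT, map_smul, LinearMap.trace_one, smul_eq_mul]
  have hdim : (Module.finrank ℂ W : ℂ) ≠ 0 := by
    have : 0 < Module.finrank ℂ W := Module.finrank_pos
    exact_mod_cast this.ne'
  rw [htr, hT]
  congr 1
  field_simp

variable [Fintype J]

lemma conj_avg (π : Representation ℂ J W) (hπ : IsIrreducible π) (Y : Module.End ℂ W) :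
    (Fintype.card J : ℂ)⁻¹ • ∑ g : J, (π g : Module.End ℂ W) * Y * π g⁻¹ =
      ((LinearMap.trace ℂ W Y) / (Module.finrank ℂ W : ℂ)) • 1 := by
  set T : Module.End ℂ W := (Fintype.card J : ℂ)⁻¹ • ∑ g : J, (π g : Module.End ℂ W) * Y * π g⁻¹
    with hTdef
  have hcomm : ∀ h : J, (π h : Module.End ℂ W) * T = T * π h := by
    intro h
    rw [hTdef, mul_smul_comm, smul_mul_assoc, Finset.mul_sum, Finset.sum_mul]
    congr 1
    refine Fintype.sum_bijective (Equiv.mulLeft h) (Equiv.bijective _) _ _ (fun g => ?_)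
    show (π h) * ((π g) * Y * (π g⁻¹)) = (π (h * g)) * Y * (π (h * g)⁻¹) * (π h)
    simp only [map_mul, mul_inv_rev, mul_assoc, ← map_mul, inv_mul_cancel_right,
      inv_mul_cancel, map_one, mul_one]
    rw [map_mul, mul_assoc]
  have := schur_scalar π hπ T hcomm
  have htr : LinearMap.trace ℂ W T = LinearMap.trace ℂ W Y := by
    rw [hTdef, map_smul, map_sum]
    have : ∀ g : J, LinearMap.trace ℂ W ((π g : Module.End ℂ W) * Y * π g⁻¹) =
        LinearMap.trace ℂ W Y := by
      intro g
      rw [LinearMap.trace_mul_comm, ← mul_assoc, ← map_mul]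
      simp
    rw [Finset.sum_congr rfl (fun g _ => this g), Finset.sum_const, Finset.card_univ,
      smul_eq_mul, nsmul_eq_mul, ← mul_assoc,
      inv_mul_cancel₀ (by exact_mod_cast Fintype.card_ne_zero : (Fintype.card J : ℂ) ≠ 0), one_mul]
  rw [htr] at this
  exact this

end Irred

section Iw

variable {U L V : Subgroup J}

lemma iwahori_bij (hIw : IwahoriDecomp ⊤ U L V) :
    Function.Bijective (fun q : ↥U × ↥L × ↥V => (q.1 : J) * q.2.1 * q.2.2) := by
  obtain ⟨-, -, -, hinj, hsurj⟩ := hIw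
  constructor
  · rintro ⟨u, l, v⟩ ⟨u', l', v'⟩ h
    have hm : ((u : J), ((l : J), (v : J))) ∈ ((U : Set J) ×ˢ (L : Set J) ×ˢ (V : Set J)) :=
      ⟨u.2, l.2, v.2⟩
    have hm' : ((u' : J), ((l' : J), (v' : J))) ∈ ((U : Set J) ×ˢ (L : Set J) ×ˢ (V : Set J)) :=
      ⟨u'.2, l'.2, v'.2⟩
    have h2 := hinj hm hm' h
    rw [Prod.ext_iff] at h2
    obtain ⟨ha, hb⟩ := h2
    rw [Prod.ext_iff] at hb
    refine Prod.ext (Subtype.ext ha) (Prod.ext (Subtype.ext hb.1) (Subtype.ext hb.2))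
  · intro g
    have hg : g ∈ ((⊤ : Subgroup J) : Set J) := by simp
    obtain ⟨⟨a, b, c⟩, hmem, heq⟩ := hsurj hg
    exact ⟨⟨⟨a, hmem.1⟩, ⟨b, hmem.2.1⟩, ⟨c, hmem.2.2⟩⟩, heq⟩

lemma iwahori_swap (hIw : IwahoriDecomp ⊤ U L V) : IwahoriDecomp ⊤ V L U := by
  obtain ⟨h1, h2, h3⟩ := hIw
  refine ⟨h2, h1, ?_, ?_, ?_⟩
  · rintro ⟨v, l, u⟩ ⟨hv, hl, hu⟩
    simp
  · rintro ⟨v, l, u⟩ ⟨hv, hl, hu⟩ ⟨v', l', u'⟩ ⟨hv', hl', hu'⟩ h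
    simp only at h
    have key : u⁻¹ * l⁻¹ * v⁻¹ = u'⁻¹ * l'⁻¹ * v'⁻¹ := by
      have := congrArg (·⁻¹) h
      simpa [mul_assoc] using this
    have := h3.2.1 (show ((u⁻¹, l⁻¹, v⁻¹) : J × J × J) ∈ (U : Set J) ×ˢ (L : Set J) ×ˢ (V : Set J)
        from ⟨U.inv_mem hu, L.inv_mem hl, V.inv_mem hv⟩)
      (show ((u'⁻¹, l'⁻¹, v'⁻¹) : J × J × J) ∈ (U : Set J) ×ˢ (L : Set J) ×ˢ (V : Set J)
        from ⟨U.inv_mem hu', L.inv_mem hl', V.inv_mem hv'⟩) key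
    rw [Prod.ext_iff] at this
    obtain ⟨ha, hb⟩ := this
    rw [Prod.ext_iff] at hb
    simp only at ha hb
    refine Prod.ext (by simpa using congrArg (·⁻¹) hb.2)
      (Prod.ext (by simpa using congrArg (·⁻¹) hb.1) (by simpa using congrArg (·⁻¹) ha))
  · intro g hg
    obtain ⟨⟨a, b, c⟩, hmem, heq⟩ := h3.2.2 (show g⁻¹ ∈ ((⊤ : Subgroup J) : Set J) by simp)
    refine ⟨(c⁻¹, b⁻¹, a⁻¹), ⟨V.inv_mem hmem.2.2, L.inv_mem hmem.2.1, U.inv_mem hmem.1⟩, ?_⟩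
    simp only at heq ⊢
    have := congrArg (·⁻¹) heq
    simpa [mul_assoc] using this

variable [Fintype J] [Fintype ↥U] [Fintype ↥L] [Fintype ↥V]

lemma iwahori_sum (hIw : IwahoriDecomp ⊤ U L V) {M : Type*} [AddCommMonoid M] (F : J → M) :
    ∑ g : J, F g = ∑ u : ↥U, ∑ l : ↥L, ∑ v : ↥V, F ((u : J) * l * v) := by
  rw [← Fintype.sum_bijective _ (iwahori_bij hIw) _ (fun g => F g) (fun q => rfl)]
  rw [Fintype.sum_prod_type]
  refine Finset.sum_congr rfl fun u _ => ?_
  rw [Fintype.sum_prod_type]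

lemma iwahori_card (hIw : IwahoriDecomp ⊤ U L V) :
    Fintype.card J = Fintype.card ↥U * Fintype.card ↥L * Fintype.card ↥V := by
  rw [← Fintype.card_of_bijective (iwahori_bij hIw)]
  simp [mul_assoc]

end Iw

section FormLayer

open LinearMap

variable {J : Type*} [Group J] [Fintype J]
variable {W : Type*} [AddCommGroup W] [Module ℂ W] [FiniteDimensional ℂ W]

/-- An auxiliary `J`-invariant positive-definite sesquilinear form. -/
def bf (π : Representation ℂ J W) (x y : W) : ℂ :=
  ∑ g : J, ∑ i, (starRingEnd ℂ) ((Module.finBasis ℂ W).repr (π g x) i) *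
    ((Module.finBasis ℂ W).repr (π g y) i)

lemma bf_smul_right (π : Representation ℂ J W) (c : ℂ) (x y : W) :
    bf π x (c • y) = c * bf π x y := by
  simp [bf, Finset.mul_sum]
  ring_nf
  simp [mul_comm, mul_left_comm]

lemma bf_smul_left (π : Representation ℂ J W) (c : ℂ) (x y : W) :
    bf π (c • x) y = (starRingEnd ℂ) c * bf π x y := by
  simp [bf, Finset.mul_sum]
  ring_nf

lemma bf_zero_right (π : Representation ℂ J W) (x : W) : bf π x 0 = 0 := by
  simp [bf]

lemma bf_sum_left (π : Representation ℂ J W) {ι : Type*} (s : Finset ι) (z : ι → W) (y : W) :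
    bf π (∑ k ∈ s, z k) y = ∑ k ∈ s, bf π (z k) y := by
  classical
  induction s using Finset.induction with
  | empty => simp [bf]
  | insert _ _ hk ih =>
      rw [Finset.sum_insert hk, Finset.sum_insert hk, ← ih]
      simp [bf, add_mul, Finset.sum_add_distrib]

lemma bf_sum_right (π : Representation ℂ J W) {ι : Type*} (s : Finset ι) (z : ι → W) (x : W) :
    bf π x (∑ k ∈ s, z k) = ∑ k ∈ s, bf π x (z k) := by
  classical
  induction s using Finset.induction with
  | empty => simp [bf]
  | insert _ _ hk ih =>
      rw [Finset.sum_insert hk, Finset.sum_insert hk, ← ih]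
      simp [bf, mul_add, Finset.sum_add_distrib]

lemma bf_rep (π : Representation ℂ J W) (h : J) (x y : W) :
    bf π (π h x) (π h y) = bf π x y := by
  unfold bf
  refine Fintype.sum_bijective (Equiv.mulRight h) (Equiv.bijective _) _ _ (fun g => ?_)
  have hx : π (g * h) x = π g (π h x) := by rw [map_mul]; rfl
  have hy : π (g * h) y = π g (π h y) := by rw [map_mul]; rfl
  simp [Equiv.mulRight, hx, hy]

def rq (π : Representation ℂ J W) (x : W) : ℝ :=
  ∑ g : J, ∑ i, Complex.normSq ((Module.finBasis ℂ W).repr (π g x) i)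

lemma bf_self (π : Representation ℂ J W) (x : W) : bf π x x = (rq π x : ℂ) := by
  unfold bf rq
  push_cast
  refine Finset.sum_congr rfl fun g _ => Finset.sum_congr rfl fun i _ => ?_
  rw [← Complex.normSq_eq_conj_mul_self]

lemma rq_nonneg (π : Representation ℂ J W) (x : W) : 0 ≤ rq π x :=
  Finset.sum_nonneg fun g _ => Finset.sum_nonneg fun i _ => Complex.normSq_nonneg _

lemma rq_eq_zero (π : Representation ℂ J W) {x : W} (h : rq π x = 0) : x = 0 := by
  have h1 : ∀ g ∈ Finset.univ,
      (∑ i, Complex.normSq ((Module.finBasis ℂ W).repr (π g x) i)) = 0 := by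
    rw [← Finset.sum_eq_zero_iff_of_nonneg
      (fun g _ => Finset.sum_nonneg fun i _ => Complex.normSq_nonneg _)]
    exact h
  have h2 := h1 1 (Finset.mem_univ 1)
  rw [Finset.sum_eq_zero_iff_of_nonneg (fun i _ => Complex.normSq_nonneg _)] at h2
  have h3 : (Module.finBasis ℂ W).repr (π 1 x) = 0 := by
    ext i
    exact Complex.normSq_eq_zero.mp (h2 i (Finset.mem_univ i))
  have := (Module.finBasis ℂ W).repr.map_eq_zero_iff.mp h3
  simpa using this

lemma bf_self_eq_zero (π : Representation ℂ J W) {x : W} (h : bf π x x = 0) : x = 0 := by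
  apply rq_eq_zero π
  have := bf_self π x
  rw [h] at this
  exact_mod_cast this.symm

lemma bf_avg_right (π : Representation ℂ J W) (H : Subgroup J) [Fintype ↥H] (x y : W) :
    bf π x (avgMap π H y) = (Fintype.card ↥H : ℂ)⁻¹ * ∑ k : ↥H, bf π x (π (k : J) y) := by
  rw [avgMap_eq_smul_sum]
  rw [LinearMap.smul_apply, LinearMap.sum_apply, bf_smul_right, bf_sum_right]

lemma bf_avg_left (π : Representation ℂ J W) (H : Subgroup J) [Fintype ↥H] (x y : W) :
    bf π (avgMap π H x) y = (Fintype.card ↥H : ℂ)⁻¹ * ∑ k : ↥H, bf π (π (k : J) x) y := by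
  rw [avgMap_eq_smul_sum]
  rw [LinearMap.smul_apply, LinearMap.sum_apply, bf_smul_left, bf_sum_left]
  rw [map_inv₀, map_natCast]

lemma bf_selfadj (π : Representation ℂ J W) (H : Subgroup J) [Fintype ↥H] (x y : W) :
    bf π (avgMap π H x) y = bf π x (avgMap π H y) := by
  rw [bf_avg_left, bf_avg_right]
  congr 1
  have step : ∀ k : ↥H, bf π x (π (k : J) y) = bf π (π ((k : J))⁻¹ x) y := by
    intro k
    have h2 : π ((k : J))⁻¹ (π (k : J) y) = y := by
      rw [← Module.End.mul_apply, ← map_mul, inv_mul_cancel, map_one]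
      rfl
    have := bf_rep π ((k : J))⁻¹ x (π (k : J) y)
    rw [h2] at this
    exact this.symm
  rw [Finset.sum_congr rfl (fun k _ => step k)]
  refine Fintype.sum_equiv (Equiv.inv ↥H) _ _ (fun k => ?_)
  simp

lemma eig_nonneg (π : Representation ℂ J W) (Hu Hv : Subgroup J) [Fintype ↥Hu] [Fintype ↥Hv]
    {μ : ℂ} {x : W} (hx : x ≠ 0) (hμ : μ ≠ 0)
    (h : (avgMap π Hu * avgMap π Hv) x = μ • x) : ∃ r : ℝ, 0 ≤ r ∧ μ = (r : ℂ) := by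
  set A := avgMap π Hu with hA
  set B := avgMap π Hv with hB
  have hABx : A (B x) = μ • x := h
  have hxval : x = μ⁻¹ • (A (B x)) := by
    rw [hABx, smul_smul, inv_mul_cancel₀ hμ, one_smul]
  have hAx : A x = x := by
    conv_lhs => rw [hxval]
    rw [map_smul]
    have : A (A (B x)) = A (B x) := by
      rw [← Module.End.mul_apply, show A * A = A from avgMap_idem π Hu]
    rw [this, ← hxval]
  have hBBx : B (B x) = B x := by
    rw [← Module.End.mul_apply, show B * B = B from avgMap_idem π Hv]
  have hkey : μ * bf π x x = bf π (B x) (B x) := by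
    calc μ * bf π x x = bf π x (μ • x) := (bf_smul_right π μ x x).symm
    _ = bf π x (A (B x)) := by rw [hABx]
    _ = bf π (A x) (B x) := (bf_selfadj π Hu x (B x)).symm
    _ = bf π x (B x) := by rw [hAx]
    _ = bf π x (B (B x)) := by rw [hBBx]
    _ = bf π (B x) (B x) := (bf_selfadj π Hv x (B x)).symm
  rw [bf_self, bf_self] at hkey
  have hrx : rq π x ≠ 0 := fun h0 => hx (rq_eq_zero π h0)
  refine ⟨rq π (B x) / rq π x, div_nonneg (rq_nonneg π _) (rq_nonneg π _), ?_⟩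
  rw [Complex.ofReal_div]
  rw [eq_div_iff (by exact_mod_cast hrx)]
  exact hkey

lemma ab_zero (π : Representation ℂ J W) (Hu Hv : Subgroup J) [Fintype ↥Hu] [Fintype ↥Hv]
    (h5 : avgMap π Hu * avgMap π Hv * avgMap π Hu * avgMap π Hv * avgMap π Hu = 0) :
    avgMap π Hu * avgMap π Hv = 0 := by
  set A := avgMap π Hu with hA
  set B := avgMap π Hv with hB
  have hAd : ∀ z y : W, bf π (A z) y = bf π z (A y) := fun z y => bf_selfadj π Hu z y
  have hBd : ∀ z y : W, bf π (B z) y = bf π z (B y) := fun z y => bf_selfadj π Hv z y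
  have hAA : ∀ z : W, A (A z) = A z := by
    intro z
    rw [← Module.End.mul_apply, show A * A = A from avgMap_idem π Hu]
  have hBB : ∀ z : W, B (B z) = B z := by
    intro z
    rw [← Module.End.mul_apply, show B * B = B from avgMap_idem π Hv]
  have e1 : ∀ x : W, A (B (A x)) = 0 := by
    intro x
    have h0 : A (B (A (B (A x)))) = 0 := by
      have := congrArg (fun T : Module.End ℂ W => T x) h5
      simpa [Module.End.mul_apply] using this
    apply bf_self_eq_zero π (x := A (B (A x)))
    calc bf π (A (B (A x))) (A (B (A x)))
        = bf π (B (A x)) (A (A (B (A x)))) := hAd _ _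
      _ = bf π (B (A x)) (A (B (A x))) := by rw [hAA]
      _ = bf π (A x) (B (A (B (A x)))) := hBd _ _
      _ = bf π x (A (B (A (B (A x))))) := hAd _ _
      _ = 0 := by rw [h0, bf_zero_right]
  have e2 : ∀ x : W, B (A x) = 0 := by
    intro x
    apply bf_self_eq_zero π (x := B (A x))
    calc bf π (B (A x)) (B (A x))
        = bf π (A x) (B (B (A x))) := hBd _ _
      _ = bf π (A x) (B (A x)) := by rw [hBB]
      _ = bf π x (A (B (A x))) := hAd _ _
      _ = 0 := by rw [e1, bf_zero_right]
  have e3 : ∀ x : W, A (B x) = 0 := by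
    intro x
    apply bf_self_eq_zero π (x := A (B x))
    calc bf π (A (B x)) (A (B x))
        = bf π (B x) (A (A (B x))) := hAd _ _
      _ = bf π (B x) (A (B x)) := by rw [hAA]
      _ = bf π x (B (A (B x))) := hBd _ _
      _ = 0 := by rw [e2, bf_zero_right]
  ext x
  simpa [Module.End.mul_apply] using e3 x

end FormLayer

section KeyIdent

open LinearMap

variable {J : Type*} [Group J] [Fintype J]
variable {W : Type*} [AddCommGroup W] [Module ℂ W] [FiniteDimensional ℂ W]
variable {U L V : Subgroup J} [Fintype ↥U] [Fintype ↥L] [Fintype ↥V]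

lemma key_A (π : Representation ℂ J W) (hIw : IwahoriDecomp ⊤ U L V) (hπ : IsIrreducible π) :
    avgMap π U * avgMap π V * avgMap π U * avgMap π V * avgMap π U
      = ((LinearMap.trace ℂ W (avgMap π U * avgMap π V)) / (Module.finrank ℂ W : ℂ)) •
          avgMap π U := by
  set A := avgMap π U with hA
  set B := avgMap π V with hB
  set κ := (LinearMap.trace ℂ W (A * B)) / (Module.finrank ℂ W : ℂ) with hκ
  have hconj := conj_avg π hπ (A * B)
  -- Step 1: rewrite the sum over J via the Iwahori decomposition
  have hterm : ∀ (u : ↥U) (l : ↥L) (v : ↥V),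
      (π ((u : J) * l * v) : Module.End ℂ W) * (A * B) * π (((u : J) * l * v))⁻¹
        = (π (u : J) : Module.End ℂ W) *
            ((π ((l : J) * v * (l : J)⁻¹) : Module.End ℂ W) * (A * B)) * π ((u : J))⁻¹ := by
    intro u l v
    have hBv : B * (π ((v : J))⁻¹ : Module.End ℂ W) = B :=
      avgMap_mul_rep π (V.inv_mem v.2)
    have hcommA : (A : Module.End ℂ W) * (π ((l : J))⁻¹ : Module.End ℂ W)
        = (π ((l : J))⁻¹ : Module.End ℂ W) * A :=
      (rep_comm_avgMap π ((Subgroup.normalizer (U : Set J)).inv_mem (hIw.1 l.2))).symm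
    have hcommB : (B : Module.End ℂ W) * (π ((l : J))⁻¹ : Module.End ℂ W)
        = (π ((l : J))⁻¹ : Module.End ℂ W) * B :=
      (rep_comm_avgMap π ((Subgroup.normalizer (V : Set J)).inv_mem (hIw.2.1 l.2))).symm
    calc (π ((u : J) * l * v) : Module.End ℂ W) * (A * B) * π (((u : J) * l * v))⁻¹
        = (π (u : J) : Module.End ℂ W) * π (l : J) * π (v : J) * (A * B) *
            (π ((v : J))⁻¹ * π ((l : J))⁻¹ * π ((u : J))⁻¹) := by
          rw [map_mul, map_mul, mul_inv_rev, mul_inv_rev, map_mul, map_mul]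
          noncomm_ring
      _ = (π (u : J) : Module.End ℂ W) * π (l : J) * π (v : J) *
            ((A * B) * π ((l : J))⁻¹) * π ((u : J))⁻¹ := by
          have : (A * B) * (π ((v : J))⁻¹ * π ((l : J))⁻¹ * π ((u : J))⁻¹)
              = (A * (B * π ((v : J))⁻¹)) * π ((l : J))⁻¹ * π ((u : J))⁻¹ := by
            noncomm_ring
          rw [mul_assoc _ (A * B), this, hBv]
          noncomm_ring
      _ = (π (u : J) : Module.End ℂ W) *
            (π (l : J) * π (v : J) * π ((l : J))⁻¹) * (A * B) * π ((u : J))⁻¹ := by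
          have : (A * B) * (π ((l : J))⁻¹ : Module.End ℂ W)
              = (π ((l : J))⁻¹ : Module.End ℂ W) * (A * B) := by
            rw [mul_assoc, hcommB, ← mul_assoc, hcommA, mul_assoc]
          rw [this]
          noncomm_ring
      _ = (π (u : J) : Module.End ℂ W) *
            ((π ((l : J) * v * (l : J)⁻¹) : Module.End ℂ W) * (A * B)) * π ((u : J))⁻¹ := by
          rw [map_mul, map_mul]
          noncomm_ring
  have hsum : ∑ g : J, (π g : Module.End ℂ W) * (A * B) * π g⁻¹
      = ((Fintype.card ↥L : ℂ) * (Fintype.card ↥V : ℂ)) •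
          ∑ u : ↥U, (π (u : J) : Module.End ℂ W) * (B * A * B) * π ((u : J))⁻¹ := by
    rw [iwahori_sum hIw]
    have inner : ∀ u : ↥U, ∀ l : ↥L,
        ∑ v : ↥V, (π ((u : J) * l * v) : Module.End ℂ W) * (A * B) * π (((u : J) * l * v))⁻¹
          = (Fintype.card ↥V : ℂ) •
              ((π (u : J) : Module.End ℂ W) * (B * A * B) * π ((u : J))⁻¹) := by
      intro u l
      rw [Finset.sum_congr rfl (fun v _ => hterm u l v)]
      have : ∑ v : ↥V, (π (u : J) : Module.End ℂ W) *
            ((π ((l : J) * v * (l : J)⁻¹) : Module.End ℂ W) * (A * B)) * π ((u : J))⁻¹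
          = (π (u : J) : Module.End ℂ W) *
              ((∑ v : ↥V, (π ((l : J) * v * (l : J)⁻¹) : Module.End ℂ W)) * (A * B)) *
                π ((u : J))⁻¹ := by
        rw [Finset.sum_mul, Finset.mul_sum, Finset.sum_mul]
      rw [this, sum_rep_conj π (hIw.2.1 l.2)]
      have hSV : (∑ v : ↥V, (π (v : J) : Module.End ℂ W)) = (Fintype.card ↥V : ℂ) • B := by
        rw [hB, avgMap_eq_smul_sum, smul_smul,
          mul_inv_cancel₀ (card_coe_ne_zero V), one_smul]
      rw [hSV]
      rw [smul_mul_assoc, mul_smul_comm, smul_mul_assoc, mul_assoc B A B]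
    have outer : ∀ u : ↥U,
        ∑ l : ↥L, ∑ v : ↥V,
            (π ((u : J) * l * v) : Module.End ℂ W) * (A * B) * π (((u : J) * l * v))⁻¹
          = ((Fintype.card ↥L : ℂ) * (Fintype.card ↥V : ℂ)) •
              ((π (u : J) : Module.End ℂ W) * (B * A * B) * π ((u : J))⁻¹) := by
      intro u
      rw [Finset.sum_congr rfl (fun l _ => inner u l), Finset.sum_const, Finset.card_univ,
        ← Nat.cast_smul_eq_nsmul ℂ, smul_smul]
    rw [Finset.sum_congr rfl (fun u _ => outer u), ← Finset.smul_sum]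
  -- Step 2: conclude (card U)⁻¹ • ∑_u π u (BAB) π u⁻¹ = κ • 1
  have hcard : (Fintype.card J : ℂ) =
      (Fintype.card ↥U : ℂ) * (Fintype.card ↥L : ℂ) * (Fintype.card ↥V : ℂ) := by
    rw [iwahori_card hIw]
    push_cast
    ring
  have hmid : (Fintype.card ↥U : ℂ)⁻¹ •
      ∑ u : ↥U, (π (u : J) : Module.End ℂ W) * (B * A * B) * π ((u : J))⁻¹ = κ • 1 := by
    rw [← hconj, hsum, smul_smul]
    congr 1
    rw [hcard]
    have h1 := card_coe_ne_zero (J := J) U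
    have h2 := card_coe_ne_zero (J := J) L
    have h3 := card_coe_ne_zero (J := J) V
    field_simp
  -- Step 3: multiply on both sides by A
  have hfin := congrArg (fun T : Module.End ℂ W => A * T * A) hmid
  have hLHS : A * ((Fintype.card ↥U : ℂ)⁻¹ •
      ∑ u : ↥U, (π (u : J) : Module.End ℂ W) * (B * A * B) * π ((u : J))⁻¹) * A
      = A * B * A * B * A := by
    rw [mul_smul_comm, smul_mul_assoc, Finset.mul_sum, Finset.sum_mul]
    have hterm2 : ∀ u : ↥U,
        A * ((π (u : J) : Module.End ℂ W) * (B * A * B) * π ((u : J))⁻¹) * A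
          = A * B * A * B * A := by
      intro u
      have h1 : A * (π (u : J) : Module.End ℂ W) = A := avgMap_mul_rep π u.2
      have h2 : (π ((u : J))⁻¹ : Module.End ℂ W) * A = A := rep_mul_avgMap π (U.inv_mem u.2)
      calc A * ((π (u : J) : Module.End ℂ W) * (B * A * B) * π ((u : J))⁻¹) * A
          = (A * (π (u : J) : Module.End ℂ W)) * (B * A * B) * ((π ((u : J))⁻¹ : Module.End ℂ W) * A) := by
            noncomm_ring
        _ = A * (B * A * B) * A := by rw [h1, h2]
        _ = A * B * A * B * A := by noncomm_ring
    rw [Finset.sum_congr rfl (fun u _ => hterm2 u), Finset.sum_const, Finset.card_univ,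
      ← Nat.cast_smul_eq_nsmul ℂ, smul_smul, inv_mul_cancel₀ (card_coe_ne_zero U), one_smul]
  have hRHS : A * (κ • (1 : Module.End ℂ W)) * A = κ • A := by
    rw [mul_smul_comm, smul_mul_assoc, mul_one, show A * A = A from avgMap_idem π U]
  rw [hLHS, hRHS] at hfin
  exact hfin

omit [FiniteDimensional ℂ W] [Fintype ↥L] in
lemma sandwich (π : Representation ℂ J W) (hIw : IwahoriDecomp ⊤ U L V) (g : J) :
    ∃ l ∈ L, (avgMap π V * avgMap π U) * (π g : Module.End ℂ W) * (avgMap π V * avgMap π U)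
      = (π l : Module.End ℂ W) *
          ((avgMap π V * avgMap π U) * (avgMap π V * avgMap π U)) := by
  set A := avgMap π U with hA
  set B := avgMap π V with hB
  obtain ⟨⟨u, l, v⟩, hq⟩ := (iwahori_bij hIw).2 g
  simp only at hq
  refine ⟨(l : J), l.2, ?_⟩
  have h1 : A * (π (u : J) : Module.End ℂ W) = A := avgMap_mul_rep π u.2
  have h2 : (π (v : J) : Module.End ℂ W) * B = B := rep_mul_avgMap π v.2
  have hcommA : (π (l : J) : Module.End ℂ W) * A = A * π (l : J) :=
    rep_comm_avgMap π (hIw.1 l.2)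
  have hcommB : (π (l : J) : Module.End ℂ W) * B = B * π (l : J) :=
    rep_comm_avgMap π (hIw.2.1 l.2)
  rw [← hq, map_mul, map_mul]
  calc (B * A) * ((π (u : J) : Module.End ℂ W) * π (l : J) * π (v : J)) * (B * A)
      = B * (A * (π (u : J) : Module.End ℂ W)) * π (l : J) * ((π (v : J) : Module.End ℂ W) * B) * A := by
        noncomm_ring
    _ = B * A * π (l : J) * B * A := by rw [h1, h2]
    _ = B * (A * π (l : J)) * B * A := by noncomm_ring
    _ = B * (π (l : J) * A) * B * A := by rw [← hcommA]
    _ = (B * π (l : J)) * (A * B) * A := by noncomm_ring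
    _ = (π (l : J) * B) * (A * B) * A := by rw [← hcommB]
    _ = π (l : J) * (B * (A * B) * A) := by noncomm_ring
    _ = (π (l : J) : Module.End ℂ W) * ((B * A) * (B * A)) := by noncomm_ring

end KeyIdent

section ScalarRange

open LinearMap

variable {J : Type*} [Group J] [Fintype J]
variable {W : Type*} [AddCommGroup W] [Module ℂ W] [FiniteDimensional ℂ W]
variable {U L V : Subgroup J} [Fintype ↥U] [Fintype ↥L] [Fintype ↥V]

lemma scalar_on_range (π : Representation ℂ J W) (hIw : IwahoriDecomp ⊤ U L V)
    (hπ : IsIrreducible π) (hab : avgMap π U * avgMap π V ≠ 0) :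
    ∃ r : ℝ, 0 < r ∧
      (∀ x ∈ LinearMap.range (avgMap π U * avgMap π V),
        (avgMap π U * avgMap π V) x = (r : ℂ) • x) ∧
      (r : ℂ) * (r : ℂ) =
        LinearMap.trace ℂ W (avgMap π U * avgMap π V) / (Module.finrank ℂ W : ℂ) := by
  set A := avgMap π U with hA
  set B := avgMap π V with hB
  set e : Module.End ℂ W := A * B with he
  set κ : ℂ := LinearMap.trace ℂ W (A * B) / (Module.finrank ℂ W : ℂ) with hκ
  have h5 : A * B * A * B * A = κ • A := key_A π hIw hπ
  have hκ0 : κ ≠ 0 := by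
    intro h0
    rw [h0, zero_smul] at h5
    exact hab (ab_zero π U V h5)
  have he3 : e * e * e = κ • e := by
    have : e * e * e = (A * B * A * B * A) * B := by rw [he]; noncomm_ring
    rw [this, h5, smul_mul_assoc, ← he]
  -- square root of κ
  obtain ⟨s, hs⟩ := IsAlgClosed.exists_pow_nat_eq κ (n := 2) (by norm_num)
  have hs0 : s ≠ 0 := by
    intro h0
    rw [h0] at hs
    simp at hs
    exact hκ0 hs.symm
  -- a nonzero element of the range
  have hrange : LinearMap.range e ≠ ⊥ := fun h0 => hab (LinearMap.range_eq_bot.mp h0)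
  obtain ⟨x₀, hx₀mem, hx₀ne⟩ := (Submodule.ne_bot_iff _).mp hrange
  have he2 : ∀ x : W, x ∈ LinearMap.range e → e (e x) = κ • x := by
    rintro x ⟨y, rfl⟩
    have := congrArg (fun T : Module.End ℂ W => T y) he3
    simpa [Module.End.mul_apply] using this
  -- produce a nonzero eigenvalue μ with μ^2 = κ and a nonzero eigenvector
  have hexists : ∃ (μ : ℂ) (x : W), μ ≠ 0 ∧ x ≠ 0 ∧ e x = μ • x ∧ μ ^ 2 = κ := by
    by_cases hp : e x₀ + s • x₀ = 0
    · refine ⟨-s, x₀, neg_ne_zero.mpr hs0, hx₀ne, ?_, by rw [neg_pow]; simpa using hs⟩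
      have : e x₀ = -(s • x₀) := by linear_combination (norm := module) hp
      rw [this, neg_smul]
    · refine ⟨s, e x₀ + s • x₀, hs0, hp, ?_, hs⟩
      rw [map_add, map_smul, he2 x₀ hx₀mem, ← hs]
      rw [smul_add, smul_smul, ← pow_two]
      abel
  obtain ⟨μ, x, hμ0, hxne, hex, hμκ⟩ := hexists
  obtain ⟨r, hr0, hμr⟩ := eig_nonneg π U V hxne hμ0 (by rw [← he]; exact hex)
  have hrne : (r : ℂ) ≠ 0 := by rw [← hμr]; exact hμ0
  have hrpos : 0 < r := by
    rcases lt_or_eq_of_le hr0 with h | h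
    · exact h
    · exfalso; apply hrne; rw [← h]; norm_num
  have hrκ : (r : ℂ) * (r : ℂ) = κ := by
    rw [← hμr, ← hμκ]; ring
  refine ⟨r, hrpos, ?_, hrκ⟩
  intro x hxmem
  set y' := e x - (r : ℂ) • x with hy'
  have hey' : e y' = (-(r : ℂ)) • y' := by
    rw [hy', map_sub, map_smul, he2 x hxmem, ← hrκ]
    rw [neg_smul, smul_sub, smul_smul]
    abel
  by_cases hy'0 : y' = 0
  · rw [hy', sub_eq_zero] at hy'0
    exact hy'0
  · exfalso
    obtain ⟨r'', hr''0, hr''⟩ := eig_nonneg π U V hy'0 (neg_ne_zero.mpr hrne)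
      (by rw [← he]; exact hey')
    have : -(r : ℝ) = r'' := by exact_mod_cast hr''
    linarith
end ScalarRange

end AuxNine

section Statement9

variable {J : Type*} [Group J] [Fintype J]

/-- Let `J = ULV` be a finite group with an Iwahori decomposition and `π` an irreducible
finite-dimensional `ℂ[J]`-module with character `χ_π`.  If `r_{U,V}π = 0` then
`|U|⁻¹|V|⁻¹ ∑_{u∈U} ∑_{v∈V} χ_π(u·l·v) = 0` for every `l ∈ L`.  Otherwise
`ρ := r_{U,V}π` is an irreducible `ℂ[L]`-module and
`|U|⁻¹|V|⁻¹ ∑_{u∈U} ∑_{v∈V} χ_π(u·l·v) = (dim ρ / dim π) · χ_ρ(l)` for every `l ∈ L`. -/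
theorem parRes_character_formula
    (U L V : Subgroup J) (hIw : IwahoriDecomp (⊤ : Subgroup J) U L V)
    [Fintype ↥U] [Fintype ↥V]
    {W : Type*} [AddCommGroup W] [Module ℂ W] [FiniteDimensional ℂ W]
    (π : Representation ℂ J W) (hπ : IsIrreducible π) :
    (parRes π U V = ⊥ →
      ∀ l ∈ L, (Fintype.card ↥U : ℂ)⁻¹ * (Fintype.card ↥V : ℂ)⁻¹ *
        ∑ u : ↥U, ∑ v : ↥V, LinearMap.trace ℂ W (π ((u : J) * l * (v : J))) = 0) ∧
    (parRes π U V ≠ ⊥ →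
      IsIrreducibleSub (resRep π L) (parRes π U V) ∧
      ∀ l ∈ L, ∀ hl : ∀ x ∈ parRes π U V, π l x ∈ parRes π U V,
        (Fintype.card ↥U : ℂ)⁻¹ * (Fintype.card ↥V : ℂ)⁻¹ *
          ∑ u : ↥U, ∑ v : ↥V, LinearMap.trace ℂ W (π ((u : J) * l * (v : J))) =
        ((Module.finrank ℂ ↥(parRes π U V) : ℂ) / (Module.finrank ℂ W : ℂ)) *
          LinearMap.trace ℂ ↥(parRes π U V) ((π l).restrict hl)) := by
  classical
  haveI : Fintype ↥L := Fintype.ofFinite _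
  set A : Module.End ℂ W := avgMap π U with hA
  set B : Module.End ℂ W := avgMap π V with hB
  have hPR : parRes π U V = LinearMap.range (A * B) := rfl
  have hLHS : ∀ l : J,
      (Fintype.card ↥U : ℂ)⁻¹ * (Fintype.card ↥V : ℂ)⁻¹ *
        ∑ u : ↥U, ∑ v : ↥V, LinearMap.trace ℂ W (π ((u : J) * l * (v : J)))
      = LinearMap.trace ℂ W (A * (π l : Module.End ℂ W) * B) := by
    intro l
    have hS : (∑ u : ↥U, (π (u : J) : Module.End ℂ W)) * (π l : Module.End ℂ W) *
        (∑ v : ↥V, (π (v : J) : Module.End ℂ W))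
        = ∑ u : ↥U, ∑ v : ↥V, (π ((u : J) * l * (v : J)) : Module.End ℂ W) := by
      rw [Finset.sum_mul, Finset.sum_mul]
      refine Finset.sum_congr rfl fun u _ => ?_
      rw [Finset.mul_sum]
      refine Finset.sum_congr rfl fun v _ => ?_
      rw [map_mul, map_mul]
    have hrhs : LinearMap.trace ℂ W (A * (π l : Module.End ℂ W) * B)
        = (Fintype.card ↥U : ℂ)⁻¹ * ((Fintype.card ↥V : ℂ)⁻¹ *
            ∑ u : ↥U, ∑ v : ↥V, LinearMap.trace ℂ W (π ((u : J) * l * (v : J)))) := by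
      rw [hA, hB, avgMap_eq_smul_sum π U, avgMap_eq_smul_sum π V, smul_mul_assoc,
        smul_mul_assoc, mul_smul_comm, hS, map_smul, map_smul, smul_eq_mul, smul_eq_mul,
        map_sum]
      congr 2
      exact Finset.sum_congr rfl fun u _ => map_sum _ _ _
    rw [hrhs]; ring
  have hcomm : ∀ l ∈ L, A * (π l : Module.End ℂ W) * B = (π l : Module.End ℂ W) * (A * B) := by
    intro l hl
    have h1 := rep_comm_avgMap π (hIw.1 hl)
    rw [hA, ← h1, mul_assoc]
  constructor
  · intro h0 l hl
    have he0 : A * B = 0 := by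
      rw [hPR] at h0; exact LinearMap.range_eq_bot.mp h0
    rw [hLHS l, hcomm l hl, he0, mul_zero, map_zero]
  · intro hne
    have hab : A * B ≠ 0 := by
      intro h
      exact hne (by rw [hPR, h, LinearMap.range_zero])
    obtain ⟨r, hrpos, hscal, hsq⟩ := scalar_on_range π hIw hπ hab
    haveI := nontrivial_of_irr π hπ
    have hdimW : (Module.finrank ℂ W : ℂ) ≠ 0 := by
      have : 0 < Module.finrank ℂ W := Module.finrank_pos
      exact_mod_cast this.ne'
    have hrne : (r : ℂ) ≠ 0 := by exact_mod_cast hrpos.ne'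
    have hscalP : ∀ x ∈ parRes π U V, (A * B) x = (r : ℂ) • x := by
      intro x hx
      exact hscal x (by rwa [← hPR])
    have hcod : ∀ x : W, (A * B) x ∈ parRes π U V := fun x => by
      rw [hPR]; exact LinearMap.mem_range_self _ x
    -- the swapped operator B*A is also nonzero, with the same scalar
    have hab' : B * A ≠ 0 := by
      intro h0
      obtain ⟨x₀, hx₀mem, hx₀ne⟩ := (Submodule.ne_bot_iff _).mp
        (show LinearMap.range (A * B) ≠ ⊥ from
          fun hh => hab (LinearMap.range_eq_bot.mp hh))
      have h1 : (A * B) x₀ = (r : ℂ) • x₀ := hscal x₀ hx₀mem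
      have h2 : (A * B) ((A * B) x₀) = (r : ℂ) • ((r : ℂ) • x₀) := by
        rw [h1, map_smul, h1]
      have h3 : (A * B) ((A * B) x₀) = 0 := by
        have hh : (A * B) ((A * B) x₀) = A ((B * A) (B x₀)) := by
          simp [Module.End.mul_apply]
        rw [hh, h0]
        simp
      rw [h3] at h2
      rw [smul_smul] at h2
      rcases smul_eq_zero.mp h2.symm with h | h
      · exact hrne (mul_self_eq_zero.mp h)
      · exact hx₀ne h
    obtain ⟨r', hr'pos, hscal', hsq'⟩ := scalar_on_range π (iwahori_swap hIw) hπ hab'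
    have hrr' : r' = r := by
      have htr : LinearMap.trace ℂ W (B * A) = LinearMap.trace ℂ W (A * B) :=
        LinearMap.trace_mul_comm ℂ B A
      rw [htr, ← hsq] at hsq'
      have hreal : r' * r' = r * r := by exact_mod_cast hsq'
      have hfac : (r' - r) * (r' + r) = 0 := by nlinarith
      rcases mul_eq_zero.mp hfac with h | h
      · linarith
      · linarith
    have hscal'' : ∀ x ∈ LinearMap.range (B * A), (B * A) x = (r : ℂ) • x := by
      rw [← hrr']; exact hscal'
    -- trace of A*B equals r * dim(parRes)
    have htre : LinearMap.trace ℂ W (A * B) =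
        (r : ℂ) * (Module.finrank ℂ ↥(parRes π U V) : ℂ) := by
      have hfact : (A * B : Module.End ℂ W) =
          (parRes π U V).subtype ∘ₗ LinearMap.codRestrict (parRes π U V) (A * B) hcod := by
        ext x; rfl
      rw [hfact, LinearMap.trace_comp_comm']
      have hres : (LinearMap.codRestrict (parRes π U V) (A * B) hcod) ∘ₗ
          (parRes π U V).subtype
          = (r : ℂ) • (LinearMap.id : ↥(parRes π U V) →ₗ[ℂ] ↥(parRes π U V)) := by
        ext x
        simp only [LinearMap.coe_comp, Function.comp_apply, Submodule.coe_subtype,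
          LinearMap.codRestrict_apply, LinearMap.smul_apply, LinearMap.id_apply,
          SetLike.val_smul]
        exact hscalP x.1 x.2
      rw [hres, map_smul, LinearMap.trace_id, smul_eq_mul]
    have hrdim : (r : ℂ) =
        (Module.finrank ℂ ↥(parRes π U V) : ℂ) / (Module.finrank ℂ W : ℂ) := by
      have h1 : (r : ℂ) * ((r : ℂ) * (Module.finrank ℂ W : ℂ))
          = (r : ℂ) * (Module.finrank ℂ ↥(parRes π U V) : ℂ) := by
        rw [← mul_assoc, hsq, div_mul_cancel₀ _ hdimW, htre]
      have h3 := mul_left_cancel₀ hrne h1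
      rw [eq_div_iff hdimW]
      exact h3
    -- scalar action of A*B on elements of T ≤ parRes
    have hTRgen : ∀ t : W, t ∈ parRes π U V → (A * B) t = (r : ℂ) • t := hscalP
    refine ⟨⟨hne, ?_⟩, ?_⟩
    · -- irreducibility
      intro T hTle hTstab
      by_cases hT0 : T = ⊥
      · exact Or.inl hT0
      refine Or.inr ?_
      obtain ⟨t₀, ht₀T, ht₀ne⟩ := (Submodule.ne_bot_iff _).mp hT0
      have hcomm2 : ∀ l : J, l ∈ L → ∀ t : W, π l (B t) = B (π l t) := by
        intro l hl t
        have h1 := rep_comm_avgMap π (hIw.2.1 hl)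
        have h2 := congrArg (fun S : Module.End ℂ W => S t) h1
        simpa [Module.End.mul_apply, hB] using h2
      have hTR : ∀ t ∈ T, (A * B) t = (r : ℂ) • t := fun t ht => hscalP t (hTle ht)
      have hBtR' : ∀ t ∈ T, B t ∈ LinearMap.range (B * A) := by
        intro t ht
        have h1 : (B * A) (B t) = (r : ℂ) • (B t) := by
          have hh : (B * A) (B t) = B ((A * B) t) := by simp [Module.End.mul_apply]
          rw [hh, hTR t ht, map_smul]
        refine ⟨(r : ℂ)⁻¹ • (B t), ?_⟩
        rw [map_smul, h1, smul_smul, inv_mul_cancel₀ hrne, one_smul]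
      set T'' : Submodule ℂ W := T.map (B : W →ₗ[ℂ] W) with hT''
      have hT''le : T'' ≤ LinearMap.range (B * A) := by
        rintro x ⟨t, ht, rfl⟩
        exact hBtR' t ht
      have hT''stab : ∀ l : J, l ∈ L → ∀ x ∈ T'', π l x ∈ T'' := by
        rintro l hl x ⟨t, ht, rfl⟩
        rw [hcomm2 l hl]
        exact Submodule.mem_map_of_mem (hTstab ⟨l, hl⟩ t ht)
      have hBt₀ : B t₀ ≠ 0 := by
        intro h0
        have h1 := hTR t₀ ht₀T
        have h2 : (A * B) t₀ = A (B t₀) := by simp [Module.End.mul_apply]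
        rw [h2, h0, map_zero] at h1
        rcases smul_eq_zero.mp h1.symm with h | h
        · exact hrne h
        · exact ht₀ne h
      set Sp : Submodule ℂ W := Submodule.span ℂ {w : W | ∃ g : J, ∃ s ∈ T'', w = π g s}
        with hSp
      have hSpStable : Stable π Sp := by
        intro g x hx
        have h1 : Submodule.map (π g : W →ₗ[ℂ] W) Sp ≤ Sp := by
          rw [hSp, Submodule.map_span]
          apply Submodule.span_le.mpr
          rintro w ⟨w', ⟨g', s, hs, rfl⟩, rfl⟩
          refine Submodule.subset_span ⟨g * g', s, hs, ?_⟩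
          rw [map_mul]
          rfl
        exact h1 ⟨x, hx, rfl⟩
      have hSpne : Sp ≠ ⊥ := by
        intro h0
        have hmem : B t₀ ∈ Sp := Submodule.subset_span
          ⟨1, B t₀, Submodule.mem_map_of_mem ht₀T, by rw [map_one]; rfl⟩
        rw [h0] at hmem
        exact hBt₀ ((Submodule.mem_bot ℂ).mp hmem)
      have hSpTop : Sp = ⊤ := (hπ.2 Sp hSpStable).resolve_left hSpne
      have hR'T'' : LinearMap.range (B * A) ≤ T'' := by
        rintro x ⟨y, rfl⟩
        have hy : y ∈ Sp := hSpTop ▸ Submodule.mem_top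
        have hle : Sp ≤ Submodule.comap ((B * A : Module.End ℂ W) : W →ₗ[ℂ] W) T'' := by
          rw [hSp]
          apply Submodule.span_le.mpr
          rintro w ⟨g, s, hs, rfl⟩
          have hsR' : (B * A) s = (r : ℂ) • s := hscal'' s (hT''le hs)
          obtain ⟨l, hlL, hsand⟩ := sandwich π hIw g
          have hsval : s = (r : ℂ)⁻¹ • ((B * A) s) := by
            rw [hsR', smul_smul, inv_mul_cancel₀ hrne, one_smul]
          have h1 : (B * A) (π g s) =
              (r : ℂ)⁻¹ • (((B * A) * (π g : Module.End ℂ W) * (B * A)) s) := by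
            calc (B * A) (π g s) = (B * A) (π g ((r : ℂ)⁻¹ • ((B * A) s))) := by
                  rw [← hsval]
              _ = (r : ℂ)⁻¹ • ((B * A) (π g ((B * A) s))) := by rw [map_smul, map_smul]
              _ = (r : ℂ)⁻¹ • (((B * A) * (π g : Module.End ℂ W) * (B * A)) s) := by
                  simp [Module.End.mul_apply]
          rw [hsand] at h1
          have h2 : ((π l : Module.End ℂ W) * ((B * A) * (B * A))) s
              = π l ((B * A) ((B * A) s)) := by simp [Module.End.mul_apply]
          have h3 : (B * A) ((B * A) s) = (r : ℂ) • ((r : ℂ) • s) := by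
            rw [hsR', map_smul, hsR']
          have h4 : (B * A) (π g s) = (r : ℂ) • (π l s) := by
            rw [h1, h2, h3, map_smul, map_smul, smul_smul, smul_smul,
              inv_mul_cancel₀ hrne, one_mul]
          show (B * A) (π g s) ∈ T''
          rw [h4]
          exact Submodule.smul_mem _ _ (hT''stab l hlL s hs)
        exact hle hy
      have hRT : parRes π U V ≤ T := by
        intro x hx
        have hxe : (A * B) x = (r : ℂ) • x := hscalP x hx
        have hBx : B x ∈ LinearMap.range (B * A) := by
          refine ⟨(r : ℂ)⁻¹ • B x, ?_⟩
          rw [map_smul]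
          have hh : (B * A) (B x) = B ((A * B) x) := by simp [Module.End.mul_apply]
          rw [hh, hxe, map_smul, smul_smul, inv_mul_cancel₀ hrne, one_smul]
        obtain ⟨t, ht, hBt⟩ := hR'T'' hBx
        have heq : (r : ℂ) • x = (r : ℂ) • t := by
          calc (r : ℂ) • x = (A * B) x := hxe.symm
            _ = A (B x) := by simp [Module.End.mul_apply]
            _ = A (B t) := by rw [hBt]
            _ = (A * B) t := by simp [Module.End.mul_apply]
            _ = (r : ℂ) • t := hTR t ht
        have hxt : x = t := smul_right_injective W hrne heq
        rw [hxt]; exact ht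
      exact le_antisymm hTle hRT
    · -- the character formula
      intro l hl hl'
      rw [hLHS l, hcomm l hl]
      have hcod2 : ∀ x : W, ((π l : Module.End ℂ W) * (A * B)) x ∈ parRes π U V := by
        intro x
        have h1 : (A * B) x ∈ parRes π U V := hcod x
        have h2 : ((π l : Module.End ℂ W) * (A * B)) x = π l ((A * B) x) := by
          simp [Module.End.mul_apply]
        rw [h2]
        exact hl' _ h1
      have hfact2 : (π l : Module.End ℂ W) * (A * B)
          = (parRes π U V).subtype ∘ₗ
              LinearMap.codRestrict (parRes π U V) ((π l : Module.End ℂ W) * (A * B)) hcod2 := by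
        ext x; rfl
      rw [hfact2, LinearMap.trace_comp_comm']
      have hres : (LinearMap.codRestrict (parRes π U V)
            ((π l : Module.End ℂ W) * (A * B)) hcod2) ∘ₗ (parRes π U V).subtype
          = (r : ℂ) • ((π l).restrict hl') := by
        ext x
        simp only [LinearMap.coe_comp, Function.comp_apply, Submodule.coe_subtype,
          LinearMap.codRestrict_apply, LinearMap.smul_apply, SetLike.val_smul,
          LinearMap.restrict_apply, Module.End.mul_apply]
        have h5 : A (B (x : W)) = (r : ℂ) • (x : W) := hscalP x.1 x.2
        rw [h5, map_smul]
      rw [hres, map_smul, smul_eq_mul, hrdim]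


end Statement9


end Parahoric
end
end

section
/- Let π be an irreducible finite-dimensional ℂ[J]-module with π(e_U)π(e_V) ≠ 0. Then, as linear operators on π, π(e_U)·π(e_V)·π(e_U) = (dim π^U / dim π) · π(e_U), where π^U is the subspace of U-fixed vectors of π. -/
open scoped BigOperators

set_option maxHeartbeats 1000000
set_option synthInstance.maxHeartbeats 1000000

noncomputable section

namespace Parahoric

variable {G : Type*} [Group G]

section AuxAvg

variable {W : Type*} [AddCommGroup W] [Module ℂ W]

lemma aux_avgMap_eq (π : Representation ℂ G W) (H : Subgroup G) [Fintype ↥H] :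
    avgMap π H = (Nat.card ↥H : ℂ)⁻¹ • ∑ h : ↥H, π (h : G) := by
  unfold avgMap
  rw [Subsingleton.elim (Fintype.ofFinite ↥H) ‹Fintype ↥H›]

lemma aux_card_ne (H : Subgroup G) [Fintype ↥H] : (Nat.card ↥H : ℂ) ≠ 0 := by
  haveI : Nonempty ↥H := ⟨1⟩
  exact_mod_cast Nat.card_pos.ne'

lemma aux_absorb_left (π : Representation ℂ G W) (H : Subgroup G) [Fintype ↥H]
    {g : G} (hg : g ∈ H) : π g * avgMap π H = avgMap π H := by
  rw [aux_avgMap_eq, mul_smul_comm, Finset.mul_sum]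
  congr 1
  exact Fintype.sum_equiv (Equiv.mulLeft (⟨g, hg⟩ : ↥H))
    (fun h => π g * π (h : G)) (fun h => π (h : G))
    (fun h => (map_mul π g (h : G)).symm)

lemma aux_absorb_right (π : Representation ℂ G W) (H : Subgroup G) [Fintype ↥H]
    {g : G} (hg : g ∈ H) : avgMap π H * π g = avgMap π H := by
  rw [aux_avgMap_eq, smul_mul_assoc, Finset.sum_mul]
  congr 1
  exact Fintype.sum_equiv (Equiv.mulRight (⟨g, hg⟩ : ↥H))
    (fun h => π (h : G) * π g) (fun h => π (h : G))
    (fun h => (map_mul π (h : G) g).symm)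

lemma aux_conj_comm (π : Representation ℂ G W) (H : Subgroup G) [Fintype ↥H]
    {l : G} (hl : l ∈ Subgroup.normalizer (H : Set G)) : π l * avgMap π H = avgMap π H * π l := by
  rw [aux_avgMap_eq, mul_smul_comm, smul_mul_assoc, Finset.mul_sum, Finset.sum_mul]
  congr 1
  have hmem : ∀ h : ↥H, l * (h : G) * l⁻¹ ∈ H :=
    fun h => (Subgroup.mem_normalizer_iff.mp hl _).mp h.2
  have hmem' : ∀ h : ↥H, l⁻¹ * (h : G) * l ∈ H :=
    fun h => (Subgroup.mem_normalizer_iff''.mp hl _).mp h.2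
  let e : ↥H ≃ ↥H :=
    { toFun := fun h => ⟨l * (h : G) * l⁻¹, hmem h⟩
      invFun := fun h => ⟨l⁻¹ * (h : G) * l, hmem' h⟩
      left_inv := fun h => by ext; simp [mul_assoc]
      right_inv := fun h => by ext; simp [mul_assoc] }
  exact Fintype.sum_equiv e (fun h => π l * π (h : G)) (fun h => π (h : G) * π l)
    (fun h => by
      show π l * π (h : G) = π (l * (h : G) * l⁻¹) * π l
      rw [← map_mul, ← map_mul]
      congr 1
      simp [mul_assoc])

lemma aux_avg_sq (π : Representation ℂ G W) (H : Subgroup G) [Fintype ↥H] :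
    avgMap π H * avgMap π H = avgMap π H := by
  nth_rewrite 1 [aux_avgMap_eq]
  rw [smul_mul_assoc, Finset.sum_mul,
    Finset.sum_congr rfl (fun h _ => aux_absorb_left π H h.2),
    Finset.sum_const, Finset.card_univ, ← Nat.card_eq_fintype_card,
    ← Nat.cast_smul_eq_nsmul ℂ, smul_smul, inv_mul_cancel₀ (aux_card_ne H), one_smul]

lemma aux_isProj (π : Representation ℂ G W) (H : Subgroup G) [Fintype ↥H] :
    LinearMap.IsProj (fixedSub π H) (avgMap π H) := by
  constructor
  · intro x
    show ∀ g ∈ H, π g (avgMap π H x) = avgMap π H x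
    intro g hg
    have h1 := aux_absorb_left π H hg
    calc π g (avgMap π H x) = (π g * avgMap π H) x := rfl
    _ = avgMap π H x := by rw [h1]
  · intro x hx
    have hx' : ∀ g ∈ H, π g x = x := hx
    have h1 : avgMap π H x = (Nat.card ↥H : ℂ)⁻¹ • ∑ h : ↥H, π (h : G) x := by
      rw [aux_avgMap_eq]
      simp
    rw [h1, Finset.sum_congr rfl (fun (h : ↥H) _ => hx' (h : G) h.2),
      Finset.sum_const, Finset.card_univ, ← Nat.card_eq_fintype_card,
      ← Nat.cast_smul_eq_nsmul ℂ, smul_smul, inv_mul_cancel₀ (aux_card_ne H), one_smul]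

lemma aux_schur [FiniteDimensional ℂ W] (π : Representation ℂ G W)
    (hπ : IsIrreducible π) (A : W →ₗ[ℂ] W) (hA : ∀ g : G, π g * A = A * π g) :
    ∃ c : ℂ, A = c • (1 : W →ₗ[ℂ] W) := by
  haveI : Nontrivial W := by
    obtain ⟨x, -, hx⟩ := (Submodule.ne_bot_iff _).mp hπ.1
    exact nontrivial_of_ne x 0 hx
  obtain ⟨c, hc⟩ := Module.End.exists_eigenvalue (A : Module.End ℂ W)
  refine ⟨c, ?_⟩
  have hstab : Stable π (Module.End.eigenspace A c) := by
    intro g x hx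
    rw [Module.End.mem_eigenspace_iff] at hx ⊢
    have h2 := congrArg (fun f : W →ₗ[ℂ] W => f x) (hA g)
    simp only [Module.End.mul_apply] at h2
    rw [← h2, hx, map_smul]
  rcases hπ.2 _ hstab with h | h
  · exact absurd h hc
  · ext x
    have hx : x ∈ Module.End.eigenspace A c := h ▸ Submodule.mem_top
    rw [Module.End.mem_eigenspace_iff] at hx
    simpa using hx

end AuxAvg

section Statement10

variable {J : Type*} [Group J] [Fintype J]

/-- Let `J = ULV` be a finite group with an Iwahori decomposition and `π` an irreducible
finite-dimensional `ℂ[J]`-module with `π(e_U)·π(e_V) ≠ 0`.  Then, as operators on `π`,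
`π(e_U)·π(e_V)·π(e_U) = (dim π^U / dim π) · π(e_U)`. -/
theorem avg_sandwich_eq_dim_ratio_smul
    (U L V : Subgroup J) (hIw : IwahoriDecomp (⊤ : Subgroup J) U L V)
    {W : Type*} [AddCommGroup W] [Module ℂ W] [FiniteDimensional ℂ W]
    (π : Representation ℂ J W) (hπ : IsIrreducible π)
    (hne : avgMap π U ∘ₗ avgMap π V ≠ 0) :
    avgMap π U ∘ₗ avgMap π V ∘ₗ avgMap π U =
      ((Module.finrank ℂ ↥(fixedSub π U) : ℂ) / (Module.finrank ℂ W : ℂ)) •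
        avgMap π U := by
  classical
  obtain ⟨hLU, hLV, hbij⟩ := hIw
  letI : Fintype ↥U := Fintype.ofFinite ↥U
  letI : Fintype ↥V := Fintype.ofFinite ↥V
  haveI : Nontrivial W := by
    obtain ⟨x, -, hx⟩ := (Submodule.ne_bot_iff _).mp hπ.1
    exact nontrivial_of_ne x 0 hx
  set P : W →ₗ[ℂ] W := avgMap π U with hPdef
  set Q : W →ₗ[ℂ] W := avgMap π V with hQdef
  set mU : ℂ := (Module.finrank ℂ ↥(fixedSub π U) : ℂ) with hmU
  set mV : ℂ := (Module.finrank ℂ ↥(fixedSub π V) : ℂ) with hmV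
  set nC : ℂ := (Module.finrank ℂ W : ℂ) with hnC
  have hn0 : nC ≠ 0 := by
    rw [hnC]
    exact_mod_cast (Module.finrank_pos (R := ℂ) (M := W)).ne'
  have hJ0 : (Fintype.card J : ℂ) ≠ 0 := by exact_mod_cast Fintype.card_ne_zero
  -- decompositions
  have hdec : ∀ j : J, ∃ u l v : J, u ∈ U ∧ l ∈ L ∧ v ∈ V ∧ j = u * l * v := by
    intro j
    obtain ⟨q, hq, hj⟩ := hbij.2.2 (show j ∈ ((⊤ : Subgroup J) : Set J) from trivial)
    exact ⟨q.1, q.2.1, q.2.2, hq.1, hq.2.1, hq.2.2, hj.symm⟩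
  have hdec' : ∀ j : J, ∃ v l u : J, v ∈ V ∧ l ∈ L ∧ u ∈ U ∧ j = v * l * u := by
    intro j
    obtain ⟨u, l, v, hu, hl, hv, h⟩ := hdec j⁻¹
    refine ⟨v⁻¹, l⁻¹, u⁻¹, V.inv_mem hv, L.inv_mem hl, U.inv_mem hu, ?_⟩
    rw [← inv_inv j, h]
    simp [mul_assoc]
  -- conjugation manipulation
  have hc_mul : ∀ (a b : J) (A : W →ₗ[ℂ] W),
      π (a * b) * A * π ((a * b)⁻¹) = π a * (π b * A * π b⁻¹) * π a⁻¹ := by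
    intro a b A
    simp only [map_mul, mul_inv_rev, mul_assoc]
  have hcuP : ∀ {u : J}, u ∈ U → π u * P * π u⁻¹ = P := by
    intro u hu
    rw [hPdef, aux_absorb_left π U hu, aux_absorb_right π U (U.inv_mem hu)]
  have hclP : ∀ {l : J}, l ∈ L → π l * P * π l⁻¹ = P := by
    intro l hl
    rw [hPdef, aux_conj_comm π U (hLU hl), mul_assoc, ← map_mul, mul_inv_cancel,
      map_one, mul_one]
  have hcvQ : ∀ {v : J}, v ∈ V → π v * Q * π v⁻¹ = Q := by
    intro v hv
    rw [hQdef, aux_absorb_left π V hv, aux_absorb_right π V (V.inv_mem hv)]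
  have hclQ : ∀ {l : J}, l ∈ L → π l * Q * π l⁻¹ = Q := by
    intro l hl
    rw [hQdef, aux_conj_comm π V (hLV hl), mul_assoc, ← map_mul, mul_inv_cancel,
      map_one, mul_one]
  -- collapses
  have hconjP : ∀ j : J, Q * (π j * P * π j⁻¹) * Q = Q * P * Q := by
    intro j
    obtain ⟨v, l, u, hv, hl, hu, rfl⟩ := hdec' j
    rw [hc_mul, hc_mul, hcuP hu, hclP hl]
    rw [show Q * (π v * P * π v⁻¹) * Q = Q * π v * P * (π v⁻¹ * Q) by
      simp only [mul_assoc]]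
    rw [hQdef, aux_absorb_right π V hv, aux_absorb_left π V (V.inv_mem hv)]
  have hconjQ : ∀ j : J, P * (π j * Q * π j⁻¹) * P = P * Q * P := by
    intro j
    obtain ⟨u, l, v, hu, hl, hv, rfl⟩ := hdec j
    rw [hc_mul, hc_mul, hcvQ hv, hclQ hl]
    rw [show P * (π u * Q * π u⁻¹) * P = P * π u * Q * (π u⁻¹ * P) by
      simp only [mul_assoc]]
    rw [hPdef, aux_absorb_right π U hu, aux_absorb_left π U (U.inv_mem hu)]
  -- conjugation averages commute with π
  have hScomm : ∀ (A : W →ₗ[ℂ] W) (g : J),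
      π g * (∑ j : J, π j * A * π j⁻¹) = (∑ j : J, π j * A * π j⁻¹) * π g := by
    intro A g
    rw [Finset.mul_sum, Finset.sum_mul]
    refine Fintype.sum_equiv (Equiv.mulLeft g) _ _ (fun j => ?_)
    show π g * (π j * A * π j⁻¹) = π (g * j) * A * π (g * j)⁻¹ * π g
    have h1 : (π ((g * j)⁻¹) : W →ₗ[ℂ] W) * π g = π j⁻¹ := by
      rw [← map_mul]
      congr 1
      simp [mul_assoc]
    rw [mul_assoc (π (g * j) * A), h1, map_mul]
    simp only [mul_assoc]
  have htrace : ∀ A : W →ₗ[ℂ] W,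
      LinearMap.trace ℂ W (∑ j : J, π j * A * π j⁻¹)
        = (Fintype.card J : ℂ) * LinearMap.trace ℂ W A := by
    intro A
    rw [map_sum]
    rw [Finset.sum_congr rfl (fun (j : J) _ => by
      rw [LinearMap.trace_mul_comm, ← mul_assoc, ← map_mul, inv_mul_cancel,
        map_one, one_mul])]
    rw [Finset.sum_const, Finset.card_univ, nsmul_eq_mul]
  have htrP : LinearMap.trace ℂ W P = mU := (aux_isProj π U).trace
  have htrQ : LinearMap.trace ℂ W Q = mV := (aux_isProj π V).trace
  -- Schur
  obtain ⟨cP, hcP⟩ := aux_schur π hπ (∑ j : J, π j * P * π j⁻¹) (hScomm P)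
  obtain ⟨cQ, hcQ⟩ := aux_schur π hπ (∑ j : J, π j * Q * π j⁻¹) (hScomm Q)
  have hcPval : cP * nC = (Fintype.card J : ℂ) * mU := by
    have h := congrArg (LinearMap.trace ℂ W) hcP
    rw [htrace, htrP, map_smul, LinearMap.trace_one, smul_eq_mul] at h
    rw [← h]
  have hcQval : cQ * nC = (Fintype.card J : ℂ) * mV := by
    have h := congrArg (LinearMap.trace ℂ W) hcQ
    rw [htrace, htrQ, map_smul, LinearMap.trace_one, smul_eq_mul] at h
    rw [← h]
  have hQQ : Q * Q = Q := by rw [hQdef]; exact aux_avg_sq π V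
  have hPP : P * P = P := by rw [hPdef]; exact aux_avg_sq π U
  -- sandwiching
  have hQPQ : Q * P * Q = (mU / nC) • Q := by
    have h1 : (Fintype.card J : ℂ) • (Q * P * Q) = cP • Q := by
      rw [Nat.cast_smul_eq_nsmul ℂ (Fintype.card J) (Q * P * Q)]
      rw [show (Fintype.card J) • (Q * P * Q) = Q * (∑ j : J, π j * P * π j⁻¹) * Q by
        rw [Finset.mul_sum, Finset.sum_mul,
          Finset.sum_congr rfl (fun (j : J) _ => hconjP j),
          Finset.sum_const, Finset.card_univ]]
      rw [hcP, mul_smul_comm, smul_mul_assoc, mul_one, hQQ]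
    have h2 : Q * P * Q = ((Fintype.card J : ℂ)⁻¹ * cP) • Q := by
      rw [← smul_smul, ← h1, smul_smul, inv_mul_cancel₀ hJ0, one_smul]
    rw [h2]
    congr 1
    rw [inv_mul_eq_div, div_eq_div_iff hJ0 hn0, mul_comm mU _]
    exact hcPval
  have hPQP : P * Q * P = (mV / nC) • P := by
    have h1 : (Fintype.card J : ℂ) • (P * Q * P) = cQ • P := by
      rw [Nat.cast_smul_eq_nsmul ℂ (Fintype.card J) (P * Q * P)]
      rw [show (Fintype.card J) • (P * Q * P) = P * (∑ j : J, π j * Q * π j⁻¹) * P by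
        rw [Finset.mul_sum, Finset.sum_mul,
          Finset.sum_congr rfl (fun (j : J) _ => hconjQ j),
          Finset.sum_const, Finset.card_univ]]
      rw [hcQ, mul_smul_comm, smul_mul_assoc, mul_one, hPP]
    have h2 : P * Q * P = ((Fintype.card J : ℂ)⁻¹ * cQ) • P := by
      rw [← smul_smul, ← h1, smul_smul, inv_mul_cancel₀ hJ0, one_smul]
    rw [h2]
    congr 1
    rw [inv_mul_eq_div, div_eq_div_iff hJ0 hn0, mul_comm mV _]
    exact hcQval
  -- compare scalars
  have hPQne : P * Q ≠ 0 := hne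
  have e1 : P * Q * P * Q = (mV / nC) • (P * Q) := by
    rw [hPQP, smul_mul_assoc]
  have e2 : P * Q * P * Q = (mU / nC) • (P * Q) := by
    rw [show P * Q * P * Q = P * (Q * P * Q) by simp only [mul_assoc], hQPQ,
      mul_smul_comm]
  have hscal : mV / nC = mU / nC := by
    have h0 : (mV / nC - mU / nC) • (P * Q) = 0 := by
      rw [sub_smul, ← e1, ← e2, sub_self]
    rcases smul_eq_zero.mp h0 with h | h
    · exact sub_eq_zero.mp h
    · exact absurd h hPQne
  show P ∘ₗ Q ∘ₗ P = (mU / nC) • P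
  have : P * (Q * P) = (mU / nC) • P := by
    rw [← mul_assoc, hPQP, hscal]
  exact this

end Statement10


end Parahoric
end
end

section
/- Let p be a prime, c ≥ 1, and let ρ : (ℤ/p^cℤ)ˣ → ℂˣ be a homomorphism that is nontrivial on the kernel of the reduction map (ℤ/p^cℤ)ˣ → (ℤ/p^{c−1}ℤ)ˣ (i.e. ρ has conductor exactly c). Then the induced representation Ind_B^J ρ̂ is an irreducible complex representation of J. -/
open scoped BigOperators

set_option maxHeartbeats 1000000
set_option synthInstance.maxHeartbeats 1000000

noncomputable section

namespace Parahoric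

variable {G : Type*} [Group G]

section AuxLemmas

lemma aux_val_p_dvd (p c : ℕ) [Fact p.Prime] [NeZero (p ^ c)] (hc : 1 ≤ c)
    (γ : ZMod (p ^ c)) (t : ZMod (p ^ c)) (hγ : γ = p * t) :
    p ∣ γ.val := by
  have hc0 : c ≠ 0 := by omega
  have h1 : ((γ.val : ℕ) : ZMod p) = 0 := by
    have h2 : ((γ.val : ℕ) : ZMod p) = (ZMod.castHom (dvd_pow_self p hc0) (ZMod p)) γ := by
      rw [ZMod.castHom_apply, ZMod.natCast_val]
    rw [h2, hγ, map_mul, map_natCast, ZMod.natCast_self, zero_mul]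
  exact (ZMod.natCast_eq_zero_iff _ _).mp h1

lemma aux_isUnit (p c : ℕ) [Fact p.Prime] [NeZero (p ^ c)] (hc : 1 ≤ c)
    (s : ZMod (p ^ c)) : IsUnit (1 + (p : ZMod (p ^ c)) * s) := by
  have hp := (Fact.out : p.Prime)
  set a := 1 + (p : ZMod (p ^ c)) * s with ha
  have hnd : ¬ p ∣ a.val := by
    intro hd
    have hc0 : c ≠ 0 := by omega
    have h1 : ((a.val : ℕ) : ZMod p) = 0 := (ZMod.natCast_eq_zero_iff _ _).mpr hd
    have h2 : ((a.val : ℕ) : ZMod p) = (ZMod.castHom (dvd_pow_self p hc0) (ZMod p)) a := by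
      rw [ZMod.castHom_apply, ZMod.natCast_val]
    have h3 : (ZMod.castHom (dvd_pow_self p hc0) (ZMod p)) a = 1 := by
      rw [ha, map_add, map_mul, map_one, map_natCast, ZMod.natCast_self, zero_mul, add_zero]
    rw [h2, h3] at h1
    exact one_ne_zero h1
  have hcop : a.val.Coprime (p ^ c) :=
    Nat.Coprime.pow_right c ((Nat.Prime.coprime_iff_not_dvd hp).mpr hnd).symm
  have := (ZMod.isUnit_iff_coprime a.val (p ^ c)).mpr hcop
  rwa [ZMod.natCast_val, ZMod.cast_id] at this

lemma aux_exists_z (p c : ℕ) [Fact p.Prime] [NeZero (p ^ c)] (hc : 1 ≤ c)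
    (γ : ZMod (p ^ c)) (hγ0 : γ ≠ 0)
    (hpγ : ∃ t, γ = (p : ZMod (p ^ c)) * t) (w : ZMod (p ^ c)) :
    ∃ z, γ * γ * z = 0 ∧ γ * z = (p : ZMod (p ^ c)) ^ (c - 1) * w := by
  have hp := (Fact.out : p.Prime)
  obtain ⟨t, ht⟩ := hpγ
  set v := γ.val with hv
  have hv0 : v ≠ 0 := fun h => hγ0 ((ZMod.val_eq_zero γ).mp h)
  set k := v.factorization p with hk
  have hk1 : 1 ≤ k := Nat.Prime.factorization_pos_of_dvd hp hv0 (aux_val_p_dvd p c hc γ t ht)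
  have hkdvd : p ^ k ∣ v := Nat.ordProj_dvd v p
  have hkc : k < c := by
    have h1 : p ^ k ≤ v := Nat.le_of_dvd (Nat.pos_of_ne_zero hv0) hkdvd
    have h2 : v < p ^ c := ZMod.val_lt γ
    exact (Nat.pow_lt_pow_iff_right hp.one_lt).mp (lt_of_le_of_lt h1 h2)
  set m := v / p ^ k with hm
  have hvm : p ^ k * m = v := Nat.ordProj_mul_ordCompl_eq_self v p
  have hmnd : ¬ p ∣ m := Nat.not_dvd_ordCompl hp hv0
  have hmcop : m.Coprime (p ^ c) :=
    Nat.Coprime.pow_right c ((Nat.Prime.coprime_iff_not_dvd hp).mpr hmnd).symm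
  have hmu : IsUnit ((m : ℕ) : ZMod (p ^ c)) := (ZMod.isUnit_iff_coprime m (p ^ c)).mpr hmcop
  obtain ⟨mu, hmu⟩ := hmu
  have hγeq : γ = (p : ZMod (p ^ c)) ^ k * (m : ZMod (p ^ c)) := by
    have h4 : ((v : ℕ) : ZMod (p ^ c)) = γ := by
      rw [hv, ZMod.natCast_val, ZMod.cast_id]
    rw [← h4, ← hvm]
    push_cast
    ring
  refine ⟨(p : ZMod (p ^ c)) ^ (c - 1 - k) * ↑mu⁻¹ * w, ?_, ?_⟩
  · have hpc : ((p : ZMod (p ^ c))) ^ c = 0 := by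
      have h5 : (((p ^ c : ℕ)) : ZMod (p ^ c)) = 0 := ZMod.natCast_self _
      rwa [Nat.cast_pow] at h5
    have hcalc : γ * γ * ((p : ZMod (p ^ c)) ^ (c - 1 - k) * ↑mu⁻¹ * w)
        = (p : ZMod (p ^ c)) ^ (k + k + (c - 1 - k))
          * ((m : ZMod (p ^ c)) * (m : ZMod (p ^ c)) * ↑mu⁻¹ * w) := by
      rw [hγeq]; ring
    rw [hcalc]
    have h6 : k + k + (c - 1 - k) = c + (k - 1) := by omega
    rw [h6, pow_add, hpc, zero_mul, zero_mul]
  · have hmul : (m : ZMod (p ^ c)) * ↑mu⁻¹ = 1 := by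
      rw [← hmu]; exact mu.mul_inv
    have hcalc : γ * ((p : ZMod (p ^ c)) ^ (c - 1 - k) * ↑mu⁻¹ * w)
        = (p : ZMod (p ^ c)) ^ (k + (c - 1 - k)) * (((m : ZMod (p ^ c)) * ↑mu⁻¹) * w) := by
      rw [hγeq]; ring
    rw [hcalc, hmul, one_mul]
    congr 2
    omega

lemma aux_ker (p c : ℕ) [Fact p.Prime] [NeZero (p ^ c)] (hc : 1 ≤ c) (x : (ZMod (p ^ c))ˣ)
    (hx : x ∈ (ZMod.unitsMap (pow_dvd_pow p (Nat.sub_le c 1))).ker) :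
    ∃ w : ZMod (p ^ c), (x : ZMod (p ^ c)) = 1 + (p : ZMod (p ^ c)) ^ (c - 1) * w := by
  have h1 : (ZMod.castHom (pow_dvd_pow p (Nat.sub_le c 1)) (ZMod (p ^ (c - 1))))
      ((x : ZMod (p ^ c)) - 1) = 0 := by
    have h0 : ZMod.unitsMap (pow_dvd_pow p (Nat.sub_le c 1)) x = 1 := hx
    have h0' : (ZMod.castHom (pow_dvd_pow p (Nat.sub_le c 1)) (ZMod (p ^ (c - 1))))
        (x : ZMod (p ^ c)) = 1 := by
      have := congrArg (Units.val) h0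
      simpa [ZMod.unitsMap] using this
    rw [map_sub, h0', map_one, sub_self]
  set a := (x : ZMod (p ^ c)) - 1 with ha
  have h2 : ((a.val : ℕ) : ZMod (p ^ (c - 1))) = 0 := by
    rw [ZMod.natCast_val, ← ZMod.castHom_apply (h := pow_dvd_pow p (Nat.sub_le c 1))]
    exact h1
  have h3 : p ^ (c - 1) ∣ a.val := (ZMod.natCast_eq_zero_iff _ _).mp h2
  obtain ⟨m, hm⟩ := h3
  refine ⟨(m : ZMod (p ^ c)), ?_⟩
  have h4 : ((a.val : ℕ) : ZMod (p ^ c)) = a := by rw [ZMod.natCast_val, ZMod.cast_id]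
  have h5 : a = (p : ZMod (p ^ c)) ^ (c - 1) * (m : ZMod (p ^ c)) := by
    rw [← h4, hm]; push_cast; ring
  rw [ha] at h5
  linear_combination h5

lemma aux_det_bz {R : Type*} [CommRing R] (z : R) :
    (!![1, z; 0, 1] : Matrix (Fin 2) (Fin 2) R).det = 1 := by
  simp [Matrix.det_fin_two]

lemma aux_det_bp {R : Type*} [CommRing R] (α γ z : R) (hz : γ * γ * z = 0) :
    (!![1 - α * (γ * z), α * α * z; 0, 1 + α * (γ * z)] : Matrix (Fin 2) (Fin 2) R).det
      = 1 := by
  rw [Matrix.det_fin_two]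
  simp only [Matrix.cons_val', Matrix.cons_val_zero, Matrix.cons_val_one, Matrix.head_cons,
    Matrix.head_fin_const, Matrix.empty_val', Matrix.cons_val_fin_one, Matrix.of_apply]
  linear_combination (-(α * α * z)) * hz

/-- The unipotent element `[[1,z],[0,1]]` of `SL₂`. -/
def bzSL {R : Type*} [CommRing R] (z : R) : Matrix.SpecialLinearGroup (Fin 2) R :=
  ⟨!![1, z; 0, 1], aux_det_bz z⟩

/-- The conjugate `X · bzSL z · X⁻¹`, written explicitly (using `(X 1 0)² z = 0`). -/
def bpSL {R : Type*} [CommRing R] (X : Matrix.SpecialLinearGroup (Fin 2) R) (z : R)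
    (hz : (X : Matrix (Fin 2) (Fin 2) R) 1 0 * (X : Matrix (Fin 2) (Fin 2) R) 1 0 * z = 0) :
    Matrix.SpecialLinearGroup (Fin 2) R :=
  ⟨!![1 - (X : Matrix (Fin 2) (Fin 2) R) 0 0 * ((X : Matrix (Fin 2) (Fin 2) R) 1 0 * z),
      (X : Matrix (Fin 2) (Fin 2) R) 0 0 * (X : Matrix (Fin 2) (Fin 2) R) 0 0 * z; 0,
      1 + (X : Matrix (Fin 2) (Fin 2) R) 0 0 * ((X : Matrix (Fin 2) (Fin 2) R) 1 0 * z)],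
    aux_det_bp _ _ _ hz⟩

lemma aux_conj {R : Type*} [CommRing R] (X : Matrix.SpecialLinearGroup (Fin 2) R) (z : R)
    (hz : (X : Matrix (Fin 2) (Fin 2) R) 1 0 * (X : Matrix (Fin 2) (Fin 2) R) 1 0 * z = 0) :
    bpSL X z hz * X = X * bzSL z := by
  have hdet : (X : Matrix (Fin 2) (Fin 2) R) 0 0 * (X : Matrix (Fin 2) (Fin 2) R) 1 1
      - (X : Matrix (Fin 2) (Fin 2) R) 0 1 * (X : Matrix (Fin 2) (Fin 2) R) 1 0 = 1 := by
    have h0 := X.2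
    rw [Matrix.det_fin_two] at h0
    exact h0
  have key : ∀ a b : Fin 2, (bpSL X z hz * X : Matrix.SpecialLinearGroup (Fin 2) R).1 a b
      = (X * bzSL z : Matrix.SpecialLinearGroup (Fin 2) R).1 a b := by
    intro a b
    rw [Matrix.SpecialLinearGroup.coe_mul, Matrix.SpecialLinearGroup.coe_mul]
    fin_cases a <;> fin_cases b <;>
      simp only [Matrix.SpecialLinearGroup.coe_mul, bpSL, bzSL, Matrix.mul_apply,
        Fin.sum_univ_two, Fin.mk_zero, Fin.mk_one, Fin.isValue, Matrix.cons_val',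
        Matrix.cons_val_zero, Matrix.cons_val_one, Matrix.head_cons, Matrix.head_fin_const,
        Matrix.empty_val', Matrix.cons_val_fin_one, Matrix.of_apply]
    · ring
    · linear_combination (X : Matrix (Fin 2) (Fin 2) R) 0 0 * z * hdet
    · linear_combination (X : Matrix (Fin 2) (Fin 2) R) 0 0 * hz
    · linear_combination (X : Matrix (Fin 2) (Fin 2) R) 1 0 * z * hdet
        + (X : Matrix (Fin 2) (Fin 2) R) 0 1 * hz
  ext a b
  exact key a b

end AuxLemmas

section Statement11

open Matrix

/-- Let `ρ` be a character of `(ℤ/p^cℤ)ˣ` of conductor exactly `c` (nontrivial on the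
kernel of reduction to `(ℤ/p^{c-1}ℤ)ˣ`).  In the Iwahori subgroup `J` of
`SL₂(ℤ/p^cℤ)`, with `B` the upper-triangular subgroup and `ρ̂(g) = ρ(g₁₁)`, the induced
representation `Ind_B^J ρ̂` is irreducible. -/
theorem indChar_irreducible
    (p c : ℕ) [Fact p.Prime] [NeZero (p ^ c)] (hc : 1 ≤ c)
    (ρ : (ZMod (p ^ c))ˣ →* ℂˣ)
    (hρ : ∃ x ∈ (ZMod.unitsMap (pow_dvd_pow p (Nat.sub_le c 1))).ker, ρ x ≠ 1)
    (B Jsub : Subgroup (Matrix.SpecialLinearGroup (Fin 2) (ZMod (p ^ c))))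
    (hB : (B : Set (Matrix.SpecialLinearGroup (Fin 2) (ZMod (p ^ c)))) =
      {g : Matrix.SpecialLinearGroup (Fin 2) (ZMod (p ^ c)) |
        (↑g : Matrix (Fin 2) (Fin 2) (ZMod (p ^ c))) 1 0 = 0})
    (hJ : (Jsub : Set (Matrix.SpecialLinearGroup (Fin 2) (ZMod (p ^ c)))) =
      {g : Matrix.SpecialLinearGroup (Fin 2) (ZMod (p ^ c)) | ∃ x : ZMod (p ^ c),
        (↑g : Matrix (Fin 2) (Fin 2) (ZMod (p ^ c))) 1 0 = (p : ZMod (p ^ c)) * x})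
    (hBJ : B ≤ Jsub)
    (ρh : ↥B →* ℂˣ)
    (hρh : ∀ (g : ↥B) (a : (ZMod (p ^ c))ˣ),
      (↑(↑g : Matrix.SpecialLinearGroup (Fin 2) (ZMod (p ^ c))) :
        Matrix (Fin 2) (Fin 2) (ZMod (p ^ c))) 0 0 = (a : ZMod (p ^ c)) → ρh g = ρ a) :
    IsIrreducibleSub (rtRep ↥Jsub ℂ)
      (indChar (B.subgroupOf Jsub)
        (ρh.comp (Subgroup.subgroupOfEquivOfLe hBJ).toMonoidHom)) := by
  classical
  letI : Fintype (Matrix.SpecialLinearGroup (Fin 2) (ZMod (p ^ c))) := Fintype.ofFinite _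
  letI : Fintype ↥Jsub := Fintype.ofFinite _
  letI : Fintype ↥(B.subgroupOf Jsub) := Fintype.ofFinite _
  set χ := ρh.comp (Subgroup.subgroupOfEquivOfLe hBJ).toMonoidHom with hχdef
  have memS : ∀ f : ↥Jsub → ℂ, f ∈ indChar (B.subgroupOf Jsub) χ ↔
      ∀ (b : ↥(B.subgroupOf Jsub)) (g : ↥Jsub), f (↑b * g) = (χ b : ℂ) * f g :=
    fun f => Iff.rfl
  have hcard : ((Fintype.card ↥(B.subgroupOf Jsub) : ℕ) : ℂ) ≠ 0 :=
    Nat.cast_ne_zero.mpr Fintype.card_ne_zero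
  have hχval : ∀ (bb : ↥(B.subgroupOf Jsub)) (a : (ZMod (p ^ c))ˣ),
      ((((bb : ↥Jsub) : Matrix.SpecialLinearGroup (Fin 2) (ZMod (p ^ c))) :
        Matrix (Fin 2) (Fin 2) (ZMod (p ^ c))) 0 0 = (a : ZMod (p ^ c))) → χ bb = ρ a := by
    intro bb a hab
    exact hρh ((Subgroup.subgroupOfEquivOfLe hBJ) bb) a hab
  set f₀ : ↥Jsub → ℂ := fun x =>
    if h : x ∈ B.subgroupOf Jsub then ((χ ⟨x, h⟩ : ℂˣ) : ℂ) else 0 with hf₀def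
  have hf₀S : f₀ ∈ indChar (B.subgroupOf Jsub) χ := by
    rw [memS]
    intro b g
    by_cases hg : g ∈ B.subgroupOf Jsub
    · have hbg : (↑b : ↥Jsub) * g ∈ B.subgroupOf Jsub := mul_mem b.2 hg
      have hb2 : (⟨(↑b : ↥Jsub) * g, hbg⟩ : ↥(B.subgroupOf Jsub)) = b * ⟨g, hg⟩ := rfl
      simp only [hf₀def, dif_pos hbg, dif_pos hg, hb2, _root_.map_mul, Units.val_mul]
    · have hbg : (↑b : ↥Jsub) * g ∉ B.subgroupOf Jsub := by
        intro hmem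
        apply hg
        have h2 := mul_mem (inv_mem b.2) hmem
        simpa using h2
      simp only [hf₀def, dif_neg hbg, dif_neg hg, mul_zero]
  have hf₀1 : f₀ 1 = 1 := by
    have h1 : (1 : ↥Jsub) ∈ B.subgroupOf Jsub := one_mem _
    have h2 : (⟨(1 : ↥Jsub), h1⟩ : ↥(B.subgroupOf Jsub)) = 1 := rfl
    simp only [hf₀def, dif_pos h1, h2, _root_.map_one, Units.val_one]
  constructor
  · intro hbot
    have h3 : f₀ = 0 := by rw [Submodule.eq_bot_iff] at hbot; exact hbot f₀ hf₀S
    rw [h3] at hf₀1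
    simp at hf₀1
  intro T hTS hTstab
  by_cases hT0 : T = ⊥
  · exact Or.inl hT0
  right
  obtain ⟨f, hfT, hf0⟩ := (Submodule.ne_bot_iff T).mp hT0
  have hfS := (memS f).mp (hTS hfT)
  obtain ⟨g₀, hg₀⟩ : ∃ g₀ : ↥Jsub, f g₀ ≠ 0 := by
    by_contra hcon
    push_neg at hcon
    exact hf0 (funext hcon)
  set h : ↥Jsub → ℂ := fun x =>
    ∑ b : ↥(B.subgroupOf Jsub), (χ b : ℂ) * f (x * (↑b)⁻¹ * g₀) with hhdef
  have hhT : h ∈ T := by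
    have hrep : h = ∑ b : ↥(B.subgroupOf Jsub),
        (χ b : ℂ) • (rtRep ↥Jsub ℂ ((↑b)⁻¹ * g₀) f) := by
      funext x
      rw [Finset.sum_apply]
      refine Finset.sum_congr rfl fun b _ => ?_
      show (χ b : ℂ) * f (x * (↑b)⁻¹ * g₀) = (χ b : ℂ) * f (x * ((↑b)⁻¹ * g₀))
      rw [mul_assoc]
    rw [hrep]
    exact Submodule.sum_mem _ fun b _ => Submodule.smul_mem _ _ (hTstab _ f hfT)
  have hhS : h ∈ indChar (B.subgroupOf Jsub) χ := by
    rw [memS]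
    intro b₀ x
    show (∑ b : ↥(B.subgroupOf Jsub), (χ b : ℂ) * f ((↑b₀ * x) * (↑b)⁻¹ * g₀))
      = (χ b₀ : ℂ) * ∑ b : ↥(B.subgroupOf Jsub), (χ b : ℂ) * f (x * (↑b)⁻¹ * g₀)
    rw [Finset.mul_sum]
    refine Finset.sum_congr rfl fun b _ => ?_
    have harr : (↑b₀ * x) * (↑b)⁻¹ * g₀ = ↑b₀ * (x * (↑b)⁻¹ * g₀) := by group
    rw [harr, hfS b₀ (x * (↑b)⁻¹ * g₀)]
    ring
  have hhR : ∀ (b₀ : ↥(B.subgroupOf Jsub)) (x : ↥Jsub),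
      h (x * ↑b₀) = (χ b₀ : ℂ) * h x := by
    intro b₀ x
    show (∑ b : ↥(B.subgroupOf Jsub), (χ b : ℂ) * f ((x * ↑b₀) * (↑b)⁻¹ * g₀))
      = (χ b₀ : ℂ) * ∑ b : ↥(B.subgroupOf Jsub), (χ b : ℂ) * f (x * (↑b)⁻¹ * g₀)
    rw [Finset.mul_sum]
    refine (Fintype.sum_equiv (Equiv.mulRight b₀)
      (fun b => (χ b₀ : ℂ) * ((χ b : ℂ) * f (x * (↑b)⁻¹ * g₀)))
      (fun b => (χ b : ℂ) * f ((x * ↑b₀) * (↑b)⁻¹ * g₀)) ?_).symm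
    intro b
    show (χ b₀ : ℂ) * ((χ b : ℂ) * f (x * (↑b)⁻¹ * g₀))
      = (χ (b * b₀) : ℂ) * f ((x * ↑b₀) * (↑(b * b₀))⁻¹ * g₀)
    have hcoe : ((↑(b * b₀) : ↥Jsub)) = (↑b : ↥Jsub) * ↑b₀ := rfl
    have harr : (x * ↑b₀) * ((↑b : ↥Jsub) * ↑b₀)⁻¹ * g₀ = x * (↑b)⁻¹ * g₀ := by group
    rw [hcoe, harr, _root_.map_mul, Units.val_mul]
    ring
  have hsupp : ∀ x : ↥Jsub, x ∉ B.subgroupOf Jsub → h x = 0 := by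
    intro x hx
    obtain ⟨t, ht⟩ : ∃ t : ZMod (p ^ c),
        (((x : Matrix.SpecialLinearGroup (Fin 2) (ZMod (p ^ c)))) :
          Matrix (Fin 2) (Fin 2) (ZMod (p ^ c))) 1 0 = (p : ZMod (p ^ c)) * t := by
      have h1 : ((x : Matrix.SpecialLinearGroup (Fin 2) (ZMod (p ^ c))))
          ∈ (Jsub : Set (Matrix.SpecialLinearGroup (Fin 2) (ZMod (p ^ c)))) := x.2
      rw [hJ] at h1
      exact h1
    have hγ0 : (((x : Matrix.SpecialLinearGroup (Fin 2) (ZMod (p ^ c)))) :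
        Matrix (Fin 2) (Fin 2) (ZMod (p ^ c))) 1 0 ≠ 0 := by
      intro h0
      apply hx
      rw [Subgroup.mem_subgroupOf]
      show ((x : Matrix.SpecialLinearGroup (Fin 2) (ZMod (p ^ c)))) ∈ B
      rw [← SetLike.mem_coe, hB]
      exact h0
    have hdetx : (((x : Matrix.SpecialLinearGroup (Fin 2) (ZMod (p ^ c)))) :
          Matrix (Fin 2) (Fin 2) (ZMod (p ^ c))) 0 0 *
        (((x : Matrix.SpecialLinearGroup (Fin 2) (ZMod (p ^ c)))) :
          Matrix (Fin 2) (Fin 2) (ZMod (p ^ c))) 1 1 -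
        (((x : Matrix.SpecialLinearGroup (Fin 2) (ZMod (p ^ c)))) :
          Matrix (Fin 2) (Fin 2) (ZMod (p ^ c))) 0 1 *
        (((x : Matrix.SpecialLinearGroup (Fin 2) (ZMod (p ^ c)))) :
          Matrix (Fin 2) (Fin 2) (ZMod (p ^ c))) 1 0 = 1 := by
      have h0 := (x : Matrix.SpecialLinearGroup (Fin 2) (ZMod (p ^ c))).2
      rw [Matrix.det_fin_two] at h0
      exact h0
    have hαδ : (((x : Matrix.SpecialLinearGroup (Fin 2) (ZMod (p ^ c)))) :
          Matrix (Fin 2) (Fin 2) (ZMod (p ^ c))) 0 0 *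
        (((x : Matrix.SpecialLinearGroup (Fin 2) (ZMod (p ^ c)))) :
          Matrix (Fin 2) (Fin 2) (ZMod (p ^ c))) 1 1
        = 1 + (p : ZMod (p ^ c)) * (t * (((x : Matrix.SpecialLinearGroup (Fin 2)
            (ZMod (p ^ c)))) : Matrix (Fin 2) (Fin 2) (ZMod (p ^ c))) 0 1) := by
      linear_combination hdetx + (((x : Matrix.SpecialLinearGroup (Fin 2) (ZMod (p ^ c)))) :
        Matrix (Fin 2) (Fin 2) (ZMod (p ^ c))) 0 1 * ht
    have hu : IsUnit ((((x : Matrix.SpecialLinearGroup (Fin 2) (ZMod (p ^ c)))) :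
        Matrix (Fin 2) (Fin 2) (ZMod (p ^ c))) 0 0) := by
      apply isUnit_of_mul_isUnit_left (y := (((x : Matrix.SpecialLinearGroup (Fin 2)
        (ZMod (p ^ c)))) : Matrix (Fin 2) (Fin 2) (ZMod (p ^ c))) 1 1)
      rw [hαδ]
      exact aux_isUnit p c hc _
    obtain ⟨αu, hαu⟩ := hu
    obtain ⟨x₀, hx₀ker, hρx₀⟩ := hρ
    obtain ⟨w, hw⟩ := aux_ker p c hc x₀ hx₀ker
    obtain ⟨z, hz1, hz2⟩ := aux_exists_z p c hc _ hγ0 ⟨t, ht⟩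
      (-((↑(αu⁻¹) : ZMod (p ^ c)) * w))
    have hαinv : (((x : Matrix.SpecialLinearGroup (Fin 2) (ZMod (p ^ c)))) :
        Matrix (Fin 2) (Fin 2) (ZMod (p ^ c))) 0 0 * (↑(αu⁻¹) : ZMod (p ^ c)) = 1 := by
      rw [← hαu]; exact αu.mul_inv
    have hαγz : (((x : Matrix.SpecialLinearGroup (Fin 2) (ZMod (p ^ c)))) :
          Matrix (Fin 2) (Fin 2) (ZMod (p ^ c))) 0 0 *
        ((((x : Matrix.SpecialLinearGroup (Fin 2) (ZMod (p ^ c)))) :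
          Matrix (Fin 2) (Fin 2) (ZMod (p ^ c))) 1 0 * z)
        = -((p : ZMod (p ^ c)) ^ (c - 1) * w) := by
      rw [hz2]
      linear_combination (-((p : ZMod (p ^ c)) ^ (c - 1) * w)) * hαinv
    have hent : ((bpSL (x : Matrix.SpecialLinearGroup (Fin 2) (ZMod (p ^ c))) z hz1 :
        Matrix.SpecialLinearGroup (Fin 2) (ZMod (p ^ c))) :
        Matrix (Fin 2) (Fin 2) (ZMod (p ^ c))) 0 0 = (x₀ : ZMod (p ^ c)) := by
      show (1 - (((x : Matrix.SpecialLinearGroup (Fin 2) (ZMod (p ^ c)))) :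
          Matrix (Fin 2) (Fin 2) (ZMod (p ^ c))) 0 0 *
        ((((x : Matrix.SpecialLinearGroup (Fin 2) (ZMod (p ^ c)))) :
          Matrix (Fin 2) (Fin 2) (ZMod (p ^ c))) 1 0 * z)) = (x₀ : ZMod (p ^ c))
      rw [hαγz, hw]
      ring
    have hBz : bzSL z ∈ B := by
      rw [← SetLike.mem_coe, hB]
      show ((bzSL z : Matrix.SpecialLinearGroup (Fin 2) (ZMod (p ^ c))) :
        Matrix (Fin 2) (Fin 2) (ZMod (p ^ c))) 1 0 = 0
      simp [bzSL]
    have hBp : bpSL (x : Matrix.SpecialLinearGroup (Fin 2) (ZMod (p ^ c))) z hz1 ∈ B := by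
      rw [← SetLike.mem_coe, hB]
      show ((bpSL (x : Matrix.SpecialLinearGroup (Fin 2) (ZMod (p ^ c))) z hz1 :
        Matrix.SpecialLinearGroup (Fin 2) (ZMod (p ^ c))) :
        Matrix (Fin 2) (Fin 2) (ZMod (p ^ c))) 1 0 = 0
      simp [bpSL]
    set bz : ↥Jsub := ⟨bzSL z, hBJ hBz⟩ with hbzdef
    set bp : ↥Jsub := ⟨bpSL (x : Matrix.SpecialLinearGroup (Fin 2) (ZMod (p ^ c))) z hz1,
      hBJ hBp⟩ with hbpdef
    have hbzB : bz ∈ B.subgroupOf Jsub := Subgroup.mem_subgroupOf.mpr hBz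
    have hbpB : bp ∈ B.subgroupOf Jsub := Subgroup.mem_subgroupOf.mpr hBp
    have hcomm : bp * x = x * bz := Subtype.ext (aux_conj _ z hz1)
    have hχbz : χ ⟨bz, hbzB⟩ = ρ 1 := by
      apply hχval
      show ((bzSL z : Matrix.SpecialLinearGroup (Fin 2) (ZMod (p ^ c))) :
        Matrix (Fin 2) (Fin 2) (ZMod (p ^ c))) 0 0 = ((1 : (ZMod (p ^ c))ˣ) : ZMod (p ^ c))
      simp [bzSL]
    have hχbp : χ ⟨bp, hbpB⟩ = ρ x₀ := hχval _ x₀ hent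
    have e1 : h (x * bz) = h x := by
      have h5 := hhR ⟨bz, hbzB⟩ x
      rw [hχbz, _root_.map_one, Units.val_one, one_mul] at h5
      exact h5
    have e2 : h (bp * x) = ((ρ x₀ : ℂˣ) : ℂ) * h x := by
      have h5 := (memS h).mp hhS ⟨bp, hbpB⟩ x
      rwa [hχbp] at h5
    have e3 : h x = ((ρ x₀ : ℂˣ) : ℂ) * h x :=
      calc h x = h (x * bz) := e1.symm
        _ = h (bp * x) := by rw [hcomm]
        _ = ((ρ x₀ : ℂˣ) : ℂ) * h x := e2
    have hne : ((ρ x₀ : ℂˣ) : ℂ) ≠ 1 := by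
      intro hcontr
      exact hρx₀ (Units.ext (by simpa using hcontr))
    have h6 : (((ρ x₀ : ℂˣ) : ℂ) - 1) * h x = 0 := by linear_combination -e3
    rcases mul_eq_zero.mp h6 with h7 | h7
    · exact absurd (sub_eq_zero.mp h7) hne
    · exact h7
  have hh1 : h 1 = ((Fintype.card ↥(B.subgroupOf Jsub) : ℕ) : ℂ) * f g₀ := by
    show (∑ b : ↥(B.subgroupOf Jsub), (χ b : ℂ) * f ((1 : ↥Jsub) * (↑b)⁻¹ * g₀)) = _
    have hterm : ∀ b : ↥(B.subgroupOf Jsub),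
        (χ b : ℂ) * f ((1 : ↥Jsub) * (↑b)⁻¹ * g₀) = f g₀ := by
      intro b
      have harr : (1 : ↥Jsub) * (↑b)⁻¹ * g₀ = (↑(b⁻¹) : ↥Jsub) * g₀ := by
        rw [one_mul]; rfl
      rw [harr, hfS b⁻¹ g₀, _root_.map_inv, ← mul_assoc, ← Units.val_mul,
        mul_inv_cancel, Units.val_one, one_mul]
    rw [Finset.sum_congr rfl fun b _ => hterm b, Finset.sum_const, Finset.card_univ,
      nsmul_eq_mul]
  have hh1ne : h 1 ≠ 0 := by
    rw [hh1]
    exact mul_ne_zero hcard hg₀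
  have hf₀T : f₀ ∈ T := by
    have hhf₀ : h = h 1 • f₀ := by
      funext y
      by_cases hy : y ∈ B.subgroupOf Jsub
      · have hy1 : (↑(⟨y, hy⟩ : ↥(B.subgroupOf Jsub)) : ↥Jsub) * 1 = y := mul_one y
        calc h y = h ((↑(⟨y, hy⟩ : ↥(B.subgroupOf Jsub)) : ↥Jsub) * 1) := by rw [hy1]
          _ = (χ ⟨y, hy⟩ : ℂ) * h 1 := (memS h).mp hhS ⟨y, hy⟩ 1
          _ = (h 1 • f₀) y := by
              rw [Pi.smul_apply, smul_eq_mul]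
              have : f₀ y = (χ ⟨y, hy⟩ : ℂ) := by simp only [hf₀def, dif_pos hy]
              rw [this]
              ring
      · have : f₀ y = 0 := by simp only [hf₀def, dif_neg hy]
        rw [hsupp y hy, Pi.smul_apply, this, smul_zero]
    have hrw : f₀ = (h 1)⁻¹ • h := by
      have h11 := congrArg (fun v : ↥Jsub → ℂ => (h 1)⁻¹ • v) hhf₀
      simp only [smul_smul, inv_mul_cancel₀ hh1ne, one_smul] at h11
      exact h11.symm
    rw [hrw]
    exact Submodule.smul_mem _ _ hhT
  apply le_antisymm hTS
  intro f' hf'S'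
  have hf'S := (memS f').mp hf'S'
  have key : ((Fintype.card ↥(B.subgroupOf Jsub) : ℕ) : ℂ) • f'
      = ∑ g : ↥Jsub, f' g⁻¹ • (rtRep ↥Jsub ℂ g f₀) := by
    funext y
    rw [Finset.sum_apply]
    have e := Fintype.sum_equiv (Equiv.mulLeft y⁻¹)
      (fun u : ↥Jsub => f' (u⁻¹ * y) * f₀ u)
      (fun g : ↥Jsub => (f' g⁻¹ • rtRep ↥Jsub ℂ g f₀) y)
      (fun u => by
        show f' (u⁻¹ * y) * f₀ u = f' (y⁻¹ * u)⁻¹ * f₀ (y * (y⁻¹ * u))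
        have h8 : (y⁻¹ * u)⁻¹ = u⁻¹ * y := by group
        have h9 : y * (y⁻¹ * u) = u := by group
        rw [h8, h9])
    rw [← e]
    have hterm : ∀ u : ↥Jsub, f' (u⁻¹ * y) * f₀ u
        = if u ∈ B.subgroupOf Jsub then f' y else 0 := by
      intro u
      by_cases hu : u ∈ B.subgroupOf Jsub
      · rw [if_pos hu]
        have hf₀u : f₀ u = (χ ⟨u, hu⟩ : ℂ) := by simp only [hf₀def, dif_pos hu]
        have huinv : u⁻¹ * y = (↑((⟨u, hu⟩ : ↥(B.subgroupOf Jsub))⁻¹) : ↥Jsub) * y := rfl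
        rw [hf₀u, huinv, hf'S (⟨u, hu⟩)⁻¹ y, _root_.map_inv]
        have h10 : ((χ ⟨u, hu⟩)⁻¹ : ℂˣ) * (χ ⟨u, hu⟩ : ℂˣ) = 1 := inv_mul_cancel _
        calc ((χ ⟨u, hu⟩)⁻¹ : ℂˣ) * f' y * (χ ⟨u, hu⟩ : ℂ)
            = (((χ ⟨u, hu⟩)⁻¹ : ℂˣ) * (χ ⟨u, hu⟩ : ℂˣ) : ℂˣ) * f' y := by
              rw [Units.val_mul]; ring
          _ = f' y := by rw [h10, Units.val_one, one_mul]
      · have hf₀u : f₀ u = 0 := by simp only [hf₀def, dif_neg hu]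
        rw [if_neg hu, hf₀u, mul_zero]
    rw [Finset.sum_congr rfl fun u _ => hterm u]
    rw [Finset.sum_ite, Finset.sum_const, Finset.sum_const_zero, add_zero, nsmul_eq_mul]
    rw [Pi.smul_apply, smul_eq_mul]
    congr 2
    rw [← Finset.card_univ]
    apply Finset.card_bij (fun (b : ↥(B.subgroupOf Jsub)) (_ : b ∈ Finset.univ) =>
      (↑b : ↥Jsub))
    · intro b _
      exact Finset.mem_filter.mpr ⟨Finset.mem_univ _, b.2⟩
    · intro b₁ _ b₂ _ hb
      exact Subtype.ext hb
    · intro u hu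
      exact ⟨⟨u, (Finset.mem_filter.mp hu).2⟩, Finset.mem_univ _, rfl⟩
  have hrw2 : f' = ((Fintype.card ↥(B.subgroupOf Jsub) : ℕ) : ℂ)⁻¹
      • (((Fintype.card ↥(B.subgroupOf Jsub) : ℕ) : ℂ) • f') := by
    rw [smul_smul, inv_mul_cancel₀ hcard, one_smul]
  rw [hrw2, key]
  exact Submodule.smul_mem _ _ (Submodule.sum_mem _ fun g _ =>
    Submodule.smul_mem _ _ (hTstab g f₀ hf₀T))

end Statement11


end Parahoric
end
end

section
/- Let p be a prime, c ≥ 1, and let ρ : (ℤ/p^cℤ)ˣ → ℂˣ be a homomorphism that is nontrivial on the kernel of the reduction map (ℤ/p^cℤ)ˣ → (ℤ/p^{c−1}ℤ)ˣ (i.e. ρ has conductor exactly c). Let π := Ind_B^J ρ̂. Then dim π = p^{c−1}, and as linear operators on π one has π(e_U)·π(e_V)·π(e_U) = p^{1−c} · π(e_U). -/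
open scoped BigOperators

set_option maxHeartbeats 1000000
set_option synthInstance.maxHeartbeats 1000000

noncomputable section

namespace Parahoric

variable {G : Type*} [Group G]

section Statement12

open Matrix

namespace IwAux

open Matrix

variable {R : Type*} [CommRing R]

/-- lower unipotent matrix in `SL₂`. -/
def lmat (t : R) : Matrix.SpecialLinearGroup (Fin 2) R :=
  ⟨!![1, 0; t, 1], by simp [Matrix.det_fin_two]⟩

/-- upper unipotent matrix in `SL₂`. -/
def umat (b : R) : Matrix.SpecialLinearGroup (Fin 2) R :=
  ⟨!![1, b; 0, 1], by simp [Matrix.det_fin_two]⟩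

@[simp] lemma lmat_coe (t : R) : (lmat t : Matrix (Fin 2) (Fin 2) R) = !![1,0;t,1] := rfl
@[simp] lemma umat_coe (b : R) : (umat b : Matrix (Fin 2) (Fin 2) R) = !![1,b;0,1] := rfl

lemma lmat_inv (t : R) : (lmat t)⁻¹ = lmat (-t) := by
  rw [inv_eq_iff_mul_eq_one]
  ext i j
  fin_cases i <;> fin_cases j <;>
    simp [Matrix.SpecialLinearGroup.coe_mul, Matrix.mul_apply, Fin.sum_univ_two, Matrix.one_apply]

lemma det_entries (g : Matrix.SpecialLinearGroup (Fin 2) R) :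
    (g : Matrix (Fin 2) (Fin 2) R) 0 0 * (g : Matrix (Fin 2) (Fin 2) R) 1 1
      - (g : Matrix (Fin 2) (Fin 2) R) 0 1 * (g : Matrix (Fin 2) (Fin 2) R) 1 0 = 1 := by
  have := g.2
  rwa [Matrix.det_fin_two] at this

lemma mul_entry (a b : Matrix.SpecialLinearGroup (Fin 2) R) (i j : Fin 2) :
    (↑(a * b) : Matrix (Fin 2) (Fin 2) R) i j
      = (a : Matrix (Fin 2) (Fin 2) R) i 0 * (b : Matrix (Fin 2) (Fin 2) R) 0 j
        + (a : Matrix (Fin 2) (Fin 2) R) i 1 * (b : Matrix (Fin 2) (Fin 2) R) 1 j := by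
  simp [Matrix.SpecialLinearGroup.coe_mul, Matrix.mul_apply, Fin.sum_univ_two]

variable (p c : ℕ) [Fact p.Prime] [NeZero (p ^ c)]

lemma pc_zero : ((p : ZMod (p ^ c)) ^ c) = 0 := by
  have : ((p ^ c : ℕ) : ZMod (p ^ c)) = 0 := ZMod.natCast_self _
  push_cast at this
  exact this

lemma isUnit_one_add_p_mul (y : ZMod (p ^ c)) : IsUnit (1 + (p : ZMod (p ^ c)) * y) := by
  have h : IsNilpotent ((p : ZMod (p ^ c)) * y) := by
    refine ⟨c, ?_⟩
    rw [mul_pow, pc_zero, zero_mul]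
  simpa [add_comm] using h.isUnit_add_one

lemma isUnit_entry (g : Matrix.SpecialLinearGroup (Fin 2) (ZMod (p ^ c)))
    (x : ZMod (p ^ c)) (hx : (g : Matrix (Fin 2) (Fin 2) (ZMod (p ^ c))) 1 0 = p * x) :
    IsUnit ((g : Matrix (Fin 2) (Fin 2) (ZMod (p ^ c))) 1 1) := by
  have hd := det_entries g
  rw [hx] at hd
  have : (g : Matrix (Fin 2) (Fin 2) (ZMod (p ^ c))) 0 0
      * (g : Matrix (Fin 2) (Fin 2) (ZMod (p ^ c))) 1 1
      = 1 + (p : ZMod (p ^ c)) * ((g : Matrix (Fin 2) (Fin 2) (ZMod (p ^ c))) 0 1 * x) := by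
    linear_combination hd
  exact isUnit_of_mul_isUnit_right (this ▸ isUnit_one_add_p_mul p c _)

lemma exists_mul_eq_ppow {s : ZMod (p ^ c)} (hs : s ≠ 0) :
    ∃ b : ZMod (p ^ c), s * b = (p : ZMod (p ^ c)) ^ (c - 1) := by
  have hp : p.Prime := Fact.out
  have hval : s.val ≠ 0 := fun h => hs ((ZMod.val_eq_zero s).mp h)
  set k := s.val.factorization p with hk
  have hdvd : p ^ k ∣ s.val := Nat.ordProj_dvd _ _
  have hklt : k < c := by
    by_contra hkc
    push_neg at hkc
    have : p ^ c ∣ s.val := dvd_trans (pow_dvd_pow p hkc) hdvd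
    have := Nat.le_of_dvd (Nat.pos_of_ne_zero hval) this
    exact absurd (lt_of_le_of_lt this (ZMod.val_lt s)) (lt_irrefl _)
  have hm : s.val = p ^ k * (s.val / p ^ k) := (Nat.ordProj_mul_ordCompl_eq_self s.val p).symm
  have hcop : IsUnit ((s.val / p ^ k : ℕ) : ZMod (p ^ c)) := by
    rw [ZMod.isUnit_iff_coprime]
    exact Nat.Coprime.pow_right _ (Nat.coprime_ordCompl hp hval).symm
  obtain ⟨u, hu⟩ := hcop
  refine ⟨(u⁻¹ : (ZMod (p ^ c))ˣ) * (p : ZMod (p ^ c)) ^ (c - 1 - k), ?_⟩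
  have hs' : s = (p : ZMod (p ^ c)) ^ k * ((s.val / p ^ k : ℕ) : ZMod (p ^ c)) := by
    rw [← Nat.cast_pow, ← Nat.cast_mul, ← hm, ZMod.natCast_zmod_val]
  rw [hs', ← hu]
  have hpow : (p : ZMod (p ^ c)) ^ k * (p : ZMod (p ^ c)) ^ (c - 1 - k)
      = (p : ZMod (p ^ c)) ^ (c - 1) := by
    rw [← pow_add]
    congr 1
    omega
  calc (p : ZMod (p ^ c)) ^ k * ↑u * (↑u⁻¹ * (p : ZMod (p ^ c)) ^ (c - 1 - k))
      = (p : ZMod (p ^ c)) ^ k * (p : ZMod (p ^ c)) ^ (c - 1 - k) * (↑u * ↑u⁻¹) := by ring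
    _ = (p : ZMod (p ^ c)) ^ (c - 1) := by rw [← Units.val_mul, mul_inv_cancel]; simp [hpow]

lemma ker_unitsMap (x : (ZMod (p ^ c))ˣ)
    (hx : x ∈ (ZMod.unitsMap (pow_dvd_pow p (Nat.sub_le c 1))).ker) :
    ∃ w : ZMod (p ^ c), (x : ZMod (p ^ c)) = 1 + (p : ZMod (p ^ c)) ^ (c - 1) * w := by
  rw [MonoidHom.mem_ker] at hx
  have h1 : ZMod.castHom (pow_dvd_pow p (Nat.sub_le c 1)) (ZMod (p ^ (c - 1)))
      ((x : ZMod (p ^ c)) - 1) = 0 := by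
    have : ((ZMod.unitsMap (pow_dvd_pow p (Nat.sub_le c 1)) x : ZMod (p ^ (c-1)))) = 1 := by
      rw [hx]; rfl
    rw [ZMod.unitsMap_def] at this
    simp only [Units.coe_map, MonoidHom.coe_coe] at this
    rw [map_sub, _root_.map_one, this, sub_self]
  set z := (x : ZMod (p ^ c)) - 1 with hz
  have h2 : (p ^ (c - 1) : ℕ) ∣ z.val := by
    have : ((z.val : ℕ) : ZMod (p ^ (c - 1))) = 0 := by
      rw [ZMod.natCast_val, ← ZMod.castHom_apply (h := pow_dvd_pow p (Nat.sub_le c 1)), h1]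
    exact (ZMod.natCast_eq_zero_iff _ _).mp this
  obtain ⟨w, hw⟩ := h2
  refine ⟨(w : ZMod (p ^ c)), ?_⟩
  have hxz : (x : ZMod (p ^ c)) = 1 + z := by rw [hz]; ring
  rw [hxz, ← ZMod.natCast_zmod_val z, hw]
  push_cast
  ring

lemma card_pR (hc : 1 ≤ c) :
    Nat.card {t : ZMod (p ^ c) // ∃ y, t = (p : ZMod (p ^ c)) * y} = p ^ (c - 1) := by
  have hp : p.Prime := Fact.out
  have hiff : ∀ t : ZMod (p ^ c),
      (∃ y, t = (p : ZMod (p ^ c)) * y) ↔ t ∈ AddSubgroup.zmultiples (p : ZMod (p ^ c)) := by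
    intro t
    constructor
    · rintro ⟨y, rfl⟩
      refine ⟨(y.val : ℤ), ?_⟩
      show ((y.val : ℤ)) • (p : ZMod (p ^ c)) = _
      rw [zsmul_eq_mul]
      push_cast
      rw [ZMod.natCast_zmod_val]
      ring
    · rintro ⟨k, rfl⟩
      exact ⟨(k : ZMod (p ^ c)),
        by show k • (p : ZMod (p ^ c)) = _; rw [zsmul_eq_mul]; ring⟩
  have e : {t : ZMod (p ^ c) // ∃ y, t = (p : ZMod (p ^ c)) * y}
      ≃ ↥(AddSubgroup.zmultiples (p : ZMod (p ^ c))) := Equiv.subtypeEquivRight hiff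
  rw [Nat.card_congr e, Nat.card_zmultiples]
  have hpn : (p : ZMod (p ^ c)) = ((p : ℕ) : ZMod (p ^ c)) := by norm_cast
  rw [hpn, ZMod.addOrderOf_coe p (NeZero.ne (p ^ c))]
  have hg : (p ^ c).gcd p = p := Nat.gcd_eq_right (dvd_pow_self p (by omega))
  rw [hg]
  have hsp : p ^ c = p ^ (c - 1) * p := by
    conv_lhs => rw [← Nat.sub_add_cancel hc]
    rw [pow_succ]
  rw [hsp, Nat.mul_div_cancel _ hp.pos]

end IwAux

open IwAux in
lemma avgMap_rtRep_apply' {G : Type*} [Group G] (H : Subgroup G) [Finite H]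
    (g : G → ℂ) (x : G) :
    letI : Fintype H := Fintype.ofFinite H
    avgMap (rtRep G ℂ) H g x = (Nat.card H : ℂ)⁻¹ * ∑ h : H, g (x * ↑h) := by
  letI : Fintype H := Fintype.ofFinite H
  simp [avgMap, rtRep, Finset.mul_sum]


namespace IwAux

lemma unit_shuffle {M₀ : Type*} [CommMonoidWithZero M₀] (a x y : M₀) (h : IsUnit a) :
    a * x * (y * Ring.inverse a) = x * y := by
  rw [mul_comm a x, mul_assoc x a, mul_comm y (Ring.inverse a), ← mul_assoc a,
    Ring.mul_inverse_cancel a h, one_mul]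

section Decomp

variable (p c : ℕ) [Fact p.Prime] [NeZero (p ^ c)]
  {Jsub B : Subgroup (Matrix.SpecialLinearGroup (Fin 2) (ZMod (p ^ c)))}

/-- slope invariant of `j ∈ J`. -/
def tJ (Jsub : Subgroup (Matrix.SpecialLinearGroup (Fin 2) (ZMod (p ^ c)))) (j : ↥Jsub) :
    ZMod (p ^ c) :=
  ((j : Matrix.SpecialLinearGroup (Fin 2) (ZMod (p ^ c)))
      : Matrix (Fin 2) (Fin 2) (ZMod (p ^ c))) 1 0
    * Ring.inverse (((j : Matrix.SpecialLinearGroup (Fin 2) (ZMod (p ^ c)))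
      : Matrix (Fin 2) (Fin 2) (ZMod (p ^ c))) 1 1)

/-- The hypothesis that `Jsub` is the Iwahori. -/
def JHyp : Prop := (Jsub : Set (Matrix.SpecialLinearGroup (Fin 2) (ZMod (p ^ c)))) =
      {g : Matrix.SpecialLinearGroup (Fin 2) (ZMod (p ^ c)) | ∃ x : ZMod (p ^ c),
        (↑g : Matrix (Fin 2) (Fin 2) (ZMod (p ^ c))) 1 0 = (p : ZMod (p ^ c)) * x}

/-- The hypothesis that `B` is the Borel. -/
def BHyp : Prop := (B : Set (Matrix.SpecialLinearGroup (Fin 2) (ZMod (p ^ c)))) =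
      {g : Matrix.SpecialLinearGroup (Fin 2) (ZMod (p ^ c)) |
        (↑g : Matrix (Fin 2) (Fin 2) (ZMod (p ^ c))) 1 0 = 0}

lemma mem_J_iff (hJ : JHyp p c (Jsub := Jsub))
    (g : Matrix.SpecialLinearGroup (Fin 2) (ZMod (p ^ c))) :
    g ∈ Jsub ↔ ∃ x : ZMod (p ^ c),
      (↑g : Matrix (Fin 2) (Fin 2) (ZMod (p ^ c))) 1 0 = (p : ZMod (p ^ c)) * x := by
  rw [← SetLike.mem_coe, hJ]; rfl

lemma mem_B_iff (hB : BHyp p c (B := B))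
    (g : Matrix.SpecialLinearGroup (Fin 2) (ZMod (p ^ c))) :
    g ∈ B ↔ (↑g : Matrix (Fin 2) (Fin 2) (ZMod (p ^ c))) 1 0 = 0 := by
  rw [← SetLike.mem_coe, hB]; rfl

variable (hJ : JHyp p c (Jsub := Jsub)) (hB : BHyp p c (B := B))

include hJ

lemma hJ10 (j : ↥Jsub) : ∃ x : ZMod (p ^ c),
    ((j : Matrix.SpecialLinearGroup (Fin 2) (ZMod (p ^ c)))
      : Matrix (Fin 2) (Fin 2) (ZMod (p ^ c))) 1 0 = (p : ZMod (p ^ c)) * x :=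
  (mem_J_iff p c hJ _).mp j.2

lemma isUnit_j11 (j : ↥Jsub) :
    IsUnit (((j : Matrix.SpecialLinearGroup (Fin 2) (ZMod (p ^ c)))
      : Matrix (Fin 2) (Fin 2) (ZMod (p ^ c))) 1 1) := by
  obtain ⟨x, hx⟩ := hJ10 p c hJ j
  exact isUnit_entry p c _ x hx

lemma tJ_mem (j : ↥Jsub) : ∃ y, tJ p c Jsub j = (p : ZMod (p ^ c)) * y := by
  obtain ⟨x, hx⟩ := hJ10 p c hJ j
  exact ⟨x * Ring.inverse _, by rw [tJ, hx, mul_assoc]⟩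

lemma lmat_mem_J (t : ZMod (p ^ c)) (ht : ∃ y, t = (p : ZMod (p ^ c)) * y) :
    lmat t ∈ Jsub := by
  rw [mem_J_iff p c hJ]
  obtain ⟨y, hy⟩ := ht
  exact ⟨y, by simp [hy]⟩

/-- representative of the coset with slope `t`. -/
def vT (t : {t : ZMod (p ^ c) // ∃ y, t = (p : ZMod (p ^ c)) * y}) : ↥Jsub :=
  ⟨lmat t.1, lmat_mem_J p c hJ t.1 t.2⟩

/-- the unipotent part of `j`. -/
def vJ (j : ↥Jsub) : ↥Jsub := vT p c hJ ⟨tJ p c Jsub j, tJ_mem p c hJ j⟩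

lemma tJ_vT (t : {t : ZMod (p ^ c) // ∃ y, t = (p : ZMod (p ^ c)) * y}) :
    tJ p c Jsub (vT p c hJ t) = t.1 := by
  simp [tJ, vT, lmat]

lemma vJ_coe (j : ↥Jsub) :
    ((vJ p c hJ j : ↥Jsub) : Matrix.SpecialLinearGroup (Fin 2) (ZMod (p ^ c)))
      = lmat (tJ p c Jsub j) := rfl

omit hJ in
lemma tJ_leftB (b j : ↥Jsub)
    (hb0 : ((b : Matrix.SpecialLinearGroup (Fin 2) (ZMod (p ^ c)))
        : Matrix (Fin 2) (Fin 2) (ZMod (p ^ c))) 1 0 = 0)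
    (hb11 : IsUnit (((b : Matrix.SpecialLinearGroup (Fin 2) (ZMod (p ^ c)))
        : Matrix (Fin 2) (Fin 2) (ZMod (p ^ c))) 1 1)) :
    tJ p c Jsub (b * j) = tJ p c Jsub j := by
  have hcoe : ((↑(b * j) : Matrix.SpecialLinearGroup (Fin 2) (ZMod (p ^ c))))
      = (b : Matrix.SpecialLinearGroup (Fin 2) (ZMod (p ^ c)))
        * (j : Matrix.SpecialLinearGroup (Fin 2) (ZMod (p ^ c))) := rfl
  rw [tJ, tJ, hcoe, mul_entry, mul_entry, hb0, zero_mul, zero_add, zero_mul, zero_add,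
    Ring.mul_inverse_rev, ← mul_assoc, mul_assoc _ _ (Ring.inverse _),
    unit_shuffle _ _ _ hb11]

include hB

lemma bJ_mem (j : ↥Jsub) : j * (vJ p c hJ j)⁻¹ ∈ B.subgroupOf Jsub := by
  rw [Subgroup.mem_subgroupOf, mem_B_iff p c hB]
  have hcoe : ((↑(j * (vJ p c hJ j)⁻¹) : Matrix.SpecialLinearGroup (Fin 2) (ZMod (p ^ c))))
      = (j : Matrix.SpecialLinearGroup (Fin 2) (ZMod (p ^ c))) * lmat (-(tJ p c Jsub j)) := by
    push_cast
    rw [← lmat_inv]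
    rfl
  rw [hcoe, mul_entry]
  have hu := isUnit_j11 p c hJ j
  have e1 : (↑(lmat (-(tJ p c Jsub j))) : Matrix (Fin 2) (Fin 2) (ZMod (p ^ c))) 0 0 = 1 := by
    simp
  have e2 : (↑(lmat (-(tJ p c Jsub j))) : Matrix (Fin 2) (Fin 2) (ZMod (p ^ c))) 1 0
      = -(tJ p c Jsub j) := by simp
  rw [e1, e2, tJ]
  have hcancel : ((j : Matrix.SpecialLinearGroup (Fin 2) (ZMod (p ^ c)))
      : Matrix (Fin 2) (Fin 2) (ZMod (p ^ c))) 1 1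
      * Ring.inverse (((j : Matrix.SpecialLinearGroup (Fin 2) (ZMod (p ^ c)))
      : Matrix (Fin 2) (Fin 2) (ZMod (p ^ c))) 1 1) = 1 := Ring.mul_inverse_cancel _ hu
  linear_combination (-(((j : Matrix.SpecialLinearGroup (Fin 2) (ZMod (p ^ c)))
      : Matrix (Fin 2) (Fin 2) (ZMod (p ^ c))) 1 0)) * hcancel

/-- the Borel part of `j`. -/
def bdec (j : ↥Jsub) : ↥(B.subgroupOf Jsub) :=
  ⟨j * (vJ p c hJ j)⁻¹, bJ_mem p c hJ hB j⟩

lemma bdec_mul_vJ (j : ↥Jsub) :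
    (↑(bdec p c hJ hB j) : ↥Jsub) * vJ p c hJ j = j := by
  show j * (vJ p c hJ j)⁻¹ * vJ p c hJ j = j
  exact inv_mul_cancel_right _ _

lemma vJ_leftB (b : ↥(B.subgroupOf Jsub)) (j : ↥Jsub) :
    vJ p c hJ ((b : ↥Jsub) * j) = vJ p c hJ j := by
  have hb0 := (mem_B_iff p c hB _).mp b.2
  have hb11 : IsUnit ((((b : ↥Jsub) : Matrix.SpecialLinearGroup (Fin 2) (ZMod (p ^ c)))
      : Matrix (Fin 2) (Fin 2) (ZMod (p ^ c))) 1 1) := isUnit_j11 p c hJ _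
  have ht := tJ_leftB p c (b : ↥Jsub) j hb0 hb11
  apply Subtype.ext
  show lmat (tJ p c Jsub ((b : ↥Jsub) * j)) = lmat (tJ p c Jsub j)
  rw [ht]

lemma bdec_leftB (b : ↥(B.subgroupOf Jsub)) (j : ↥Jsub) :
    bdec p c hJ hB ((b : ↥Jsub) * j) = b * bdec p c hJ hB j := by
  apply Subtype.ext
  show ((b : ↥Jsub) * j) * (vJ p c hJ ((b : ↥Jsub) * j))⁻¹
    = (b : ↥Jsub) * (j * (vJ p c hJ j)⁻¹)
  rw [vJ_leftB p c hJ hB b j, mul_assoc]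

lemma bdec_vT (t : {t : ZMod (p ^ c) // ∃ y, t = (p : ZMod (p ^ c)) * y}) :
    bdec p c hJ hB (vT p c hJ t) = 1 := by
  apply Subtype.ext
  show (vT p c hJ t : ↥Jsub) * (vJ p c hJ (vT p c hJ t))⁻¹ = ↑(1 : ↥(B.subgroupOf Jsub))
  have hv : vJ p c hJ (vT p c hJ t) = vT p c hJ t := by
    apply Subtype.ext
    show lmat (tJ p c Jsub (vT p c hJ t)) = lmat t.1
    rw [tJ_vT]
  rw [hv, mul_inv_cancel]
  rfl

end Decomp

end IwAux


section AvgLemmas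

variable {G : Type*} [Group G]

open IwAux in
lemma avgMap_rtRep_apply (H : Subgroup G) [Finite H] (g : G → ℂ) (x : G) :
    letI : Fintype H := Fintype.ofFinite H
    avgMap (rtRep G ℂ) H g x = (Nat.card H : ℂ)⁻¹ * ∑ h : H, g (x * ↑h) := by
  letI : Fintype H := Fintype.ofFinite H
  simp [avgMap, rtRep, Finset.mul_sum]

lemma avg_right_inv (H : Subgroup G) [Finite H] (g : G → ℂ) (x : G) (u : ↥H) :
    avgMap (rtRep G ℂ) H g (x * ↑u) = avgMap (rtRep G ℂ) H g x := by
  letI : Fintype H := Fintype.ofFinite H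
  rw [avgMap_rtRep_apply, avgMap_rtRep_apply]
  congr 1
  refine Fintype.sum_equiv (Equiv.mulLeft u) _ _ (fun h => ?_)
  simp [mul_assoc]

lemma avg_left_equiv (H : Subgroup G) [Finite H] (g : G → ℂ) (r : ℂ) (b : G)
    (hg : ∀ x, g (b * x) = r * g x) (x : G) :
    avgMap (rtRep G ℂ) H g (b * x) = r * avgMap (rtRep G ℂ) H g x := by
  letI : Fintype H := Fintype.ofFinite H
  rw [avgMap_rtRep_apply, avgMap_rtRep_apply]
  rw [Finset.sum_congr rfl (fun h _ => by rw [mul_assoc, hg (x * ↑h)])]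
  rw [← Finset.mul_sum]
  ring

lemma eq_zero_of_self_eq_mul {a r : ℂ} (h : a = r * a) (hr : r ≠ 1) : a = 0 := by
  have h2 : (r - 1) * a = 0 := by linear_combination -h
  rcases mul_eq_zero.mp h2 with h3 | h3
  · exact absurd (sub_eq_zero.mp h3) hr
  · exact h3

end AvgLemmas


/-- Let `ρ` be a character of `(ℤ/p^cℤ)ˣ` of conductor exactly `c`, and let
`π = Ind_B^J ρ̂` in the Iwahori subgroup `J` of `SL₂(ℤ/p^cℤ)`.  Then `dim π = p^{c-1}`,
and as operators on `π` one has `π(e_U)·π(e_V)·π(e_U) = p^{1-c}·π(e_U)`. -/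
theorem indChar_dim_and_avg_identity
    (p c : ℕ) [Fact p.Prime] [NeZero (p ^ c)] (hc : 1 ≤ c)
    (ρ : (ZMod (p ^ c))ˣ →* ℂˣ)
    (hρ : ∃ x ∈ (ZMod.unitsMap (pow_dvd_pow p (Nat.sub_le c 1))).ker, ρ x ≠ 1)
    (B Jsub U V : Subgroup (Matrix.SpecialLinearGroup (Fin 2) (ZMod (p ^ c))))
    (hB : (B : Set (Matrix.SpecialLinearGroup (Fin 2) (ZMod (p ^ c)))) =
      {g : Matrix.SpecialLinearGroup (Fin 2) (ZMod (p ^ c)) |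
        (↑g : Matrix (Fin 2) (Fin 2) (ZMod (p ^ c))) 1 0 = 0})
    (hJ : (Jsub : Set (Matrix.SpecialLinearGroup (Fin 2) (ZMod (p ^ c)))) =
      {g : Matrix.SpecialLinearGroup (Fin 2) (ZMod (p ^ c)) | ∃ x : ZMod (p ^ c),
        (↑g : Matrix (Fin 2) (Fin 2) (ZMod (p ^ c))) 1 0 = (p : ZMod (p ^ c)) * x})
    (hU : (U : Set (Matrix.SpecialLinearGroup (Fin 2) (ZMod (p ^ c)))) =
      {g : Matrix.SpecialLinearGroup (Fin 2) (ZMod (p ^ c)) | ∃ b : ZMod (p ^ c),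
        (↑g : Matrix (Fin 2) (Fin 2) (ZMod (p ^ c))) = !![1, b; 0, 1]})
    (hV : (V : Set (Matrix.SpecialLinearGroup (Fin 2) (ZMod (p ^ c)))) =
      {g : Matrix.SpecialLinearGroup (Fin 2) (ZMod (p ^ c)) | ∃ c' : ZMod (p ^ c),
        (∃ c'' : ZMod (p ^ c), c' = (p : ZMod (p ^ c)) * c'') ∧
        (↑g : Matrix (Fin 2) (Fin 2) (ZMod (p ^ c))) = !![1, 0; c', 1]})
    (hBJ : B ≤ Jsub) (hUJ : U ≤ Jsub) (hVJ : V ≤ Jsub)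
    (ρh : ↥B →* ℂˣ)
    (hρh : ∀ (g : ↥B) (a : (ZMod (p ^ c))ˣ),
      (↑(↑g : Matrix.SpecialLinearGroup (Fin 2) (ZMod (p ^ c))) :
        Matrix (Fin 2) (Fin 2) (ZMod (p ^ c))) 0 0 = (a : ZMod (p ^ c)) → ρh g = ρ a) :
    dimC (M := ↥Jsub → ℂ)
        (indChar (B.subgroupOf Jsub)
          (ρh.comp (Subgroup.subgroupOfEquivOfLe hBJ).toMonoidHom)) = p ^ (c - 1) ∧
    ∀ f ∈ indChar (B.subgroupOf Jsub)
        (ρh.comp (Subgroup.subgroupOfEquivOfLe hBJ).toMonoidHom),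
      avgMap (rtRep ↥Jsub ℂ) (U.subgroupOf Jsub)
          (avgMap (rtRep ↥Jsub ℂ) (V.subgroupOf Jsub)
            (avgMap (rtRep ↥Jsub ℂ) (U.subgroupOf Jsub) f)) =
        ((p : ℂ) ^ ((1 : ℤ) - (c : ℤ))) •
          avgMap (rtRep ↥Jsub ℂ) (U.subgroupOf Jsub) f := by
  classical
  have hJ' : IwAux.JHyp p c (Jsub := Jsub) := hJ
  have hB' : IwAux.BHyp p c (B := B) := hB
  set χ : ↥(B.subgroupOf Jsub) →* ℂˣ :=
    ρh.comp (Subgroup.subgroupOfEquivOfLe hBJ).toMonoidHom with hχdef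
  have hχval : ∀ (b : ↥(B.subgroupOf Jsub)) (a : (ZMod (p ^ c))ˣ),
      (↑(↑(↑b : ↥Jsub) : Matrix.SpecialLinearGroup (Fin 2) (ZMod (p ^ c)))
        : Matrix (Fin 2) (Fin 2) (ZMod (p ^ c))) 0 0 = (a : ZMod (p ^ c)) → χ b = ρ a := by
    intro b a hab
    exact hρh ((Subgroup.subgroupOfEquivOfLe hBJ) b) a hab
  have heval : ∀ (g : ↥Jsub → ℂ),
      (∀ (b : ↥(B.subgroupOf Jsub)) (x : ↥Jsub), g (↑b * x) = (χ b : ℂ) * g x) →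
      ∀ j : ↥Jsub,
        g j = (χ (IwAux.bdec p c hJ' hB' j) : ℂ) * g (IwAux.vJ p c hJ' j) := by
    intro g hg j
    conv_lhs => rw [← IwAux.bdec_mul_vJ p c hJ' hB' j]
    exact hg _ _
  have hUmem : ∀ g : Matrix.SpecialLinearGroup (Fin 2) (ZMod (p ^ c)), g ∈ U ↔
      ∃ b0 : ZMod (p ^ c),
        (↑g : Matrix (Fin 2) (Fin 2) (ZMod (p ^ c))) = !![1, b0; 0, 1] := by
    intro g; rw [← SetLike.mem_coe, hU]; rfl
  have hVmem : ∀ g : Matrix.SpecialLinearGroup (Fin 2) (ZMod (p ^ c)), g ∈ V ↔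
      ∃ c' : ZMod (p ^ c), (∃ c'' : ZMod (p ^ c), c' = (p : ZMod (p ^ c)) * c'') ∧
        (↑g : Matrix (Fin 2) (Fin 2) (ZMod (p ^ c))) = !![1, 0; c', 1] := by
    intro g; rw [← SetLike.mem_coe, hV]; rfl
  have hUinB : ∀ u : ↥(U.subgroupOf Jsub), (↑u : ↥Jsub) ∈ B.subgroupOf Jsub := by
    intro u
    obtain ⟨b0, hb0⟩ := (hUmem _).mp ((Subgroup.mem_subgroupOf).mp u.2)
    rw [Subgroup.mem_subgroupOf, IwAux.mem_B_iff p c hB', hb0]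
    simp
  have hχU : ∀ (u : ↥(U.subgroupOf Jsub)), (χ ⟨↑u, hUinB u⟩ : ℂ) = 1 := by
    intro u
    obtain ⟨b0, hb0⟩ := (hUmem _).mp ((Subgroup.mem_subgroupOf).mp u.2)
    have h1 := hχval ⟨↑u, hUinB u⟩ 1 (by rw [hb0]; simp)
    rw [h1, _root_.map_one, Units.val_one]
  have hVcard : Nat.card ↥(V.subgroupOf Jsub) = p ^ (c - 1) := by
    rw [← IwAux.card_pR p c hc]
    have hent : ∀ v : ↥(V.subgroupOf Jsub), ∃ y,
        ((↑(↑v : ↥Jsub) : Matrix.SpecialLinearGroup (Fin 2) (ZMod (p ^ c)))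
          : Matrix (Fin 2) (Fin 2) (ZMod (p ^ c))) 1 0 = (p : ZMod (p ^ c)) * y := by
      intro v
      obtain ⟨c', ⟨c'', hcc⟩, hmat⟩ := (hVmem _).mp ((Subgroup.mem_subgroupOf).mp v.2)
      rw [hmat]
      exact ⟨c'', by simp [hcc]⟩
    apply Nat.card_congr
      (Equiv.ofBijective (fun v : ↥(V.subgroupOf Jsub) =>
        (⟨_, hent v⟩ : {t : ZMod (p ^ c) // ∃ y, t = (p : ZMod (p ^ c)) * y})) ?_)
    constructor
    · intro v1 v2 h12
      obtain ⟨c1, _, hm1⟩ := (hVmem _).mp ((Subgroup.mem_subgroupOf).mp v1.2)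
      obtain ⟨c2, _, hm2⟩ := (hVmem _).mp ((Subgroup.mem_subgroupOf).mp v2.2)
      have he := congrArg Subtype.val h12
      simp only at he
      rw [hm1, hm2] at he
      simp at he
      apply Subtype.ext; apply Subtype.ext; apply Subtype.ext
      rw [hm1, hm2, he]
    · intro t
      have hmemV : IwAux.lmat t.1 ∈ V := (hVmem _).mpr ⟨t.1, t.2, rfl⟩
      refine ⟨⟨⟨IwAux.lmat t.1, hVJ hmemV⟩, (Subgroup.mem_subgroupOf).mpr hmemV⟩, ?_⟩
      apply Subtype.ext
      simp [IwAux.lmat]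
  constructor
  · -- dimension statement
    letI : Fintype {t : ZMod (p ^ c) // ∃ y, t = (p : ZMod (p ^ c)) * y} :=
      Fintype.ofFinite _
    set E : ↥(indChar (B.subgroupOf Jsub) χ) →ₗ[ℂ]
        ({t : ZMod (p ^ c) // ∃ y, t = (p : ZMod (p ^ c)) * y} → ℂ) :=
      { toFun := fun f t => (f : ↥Jsub → ℂ) (IwAux.vT p c hJ' t)
        map_add' := fun f g => rfl
        map_smul' := fun r f => rfl } with hEdef
    have hinj : Function.Injective E := by
      intro f g hfg
      apply Subtype.ext
      funext j
      have hf : ∀ (b : ↥(B.subgroupOf Jsub)) (x : ↥Jsub),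
          (f : ↥Jsub → ℂ) (↑b * x) = (χ b : ℂ) * (f : ↥Jsub → ℂ) x := f.2
      have hg : ∀ (b : ↥(B.subgroupOf Jsub)) (x : ↥Jsub),
          (g : ↥Jsub → ℂ) (↑b * x) = (χ b : ℂ) * (g : ↥Jsub → ℂ) x := g.2
      rw [heval _ hf j, heval _ hg j]
      have hvj : (f : ↥Jsub → ℂ) (IwAux.vJ p c hJ' j)
          = (g : ↥Jsub → ℂ) (IwAux.vJ p c hJ' j) :=
        congrFun hfg ⟨IwAux.tJ p c Jsub j, IwAux.tJ_mem p c hJ' j⟩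
      rw [hvj]
    have hsurj : Function.Surjective E := by
      intro ψ
      have hmem : (fun j => (χ (IwAux.bdec p c hJ' hB' j) : ℂ)
          * ψ ⟨IwAux.tJ p c Jsub j, IwAux.tJ_mem p c hJ' j⟩) ∈
          indChar (B.subgroupOf Jsub) χ := by
        intro b x
        have ht : IwAux.tJ p c Jsub ((b : ↥Jsub) * x) = IwAux.tJ p c Jsub x :=
          IwAux.tJ_leftB p c _ x ((IwAux.mem_B_iff p c hB' _).mp b.2)
            (IwAux.isUnit_j11 p c hJ' _)
        have hb : IwAux.bdec p c hJ' hB' ((b : ↥Jsub) * x)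
            = b * IwAux.bdec p c hJ' hB' x := IwAux.bdec_leftB p c hJ' hB' b x
        have hψ : ψ ⟨IwAux.tJ p c Jsub ((b : ↥Jsub) * x),
              IwAux.tJ_mem p c hJ' ((b : ↥Jsub) * x)⟩
            = ψ ⟨IwAux.tJ p c Jsub x, IwAux.tJ_mem p c hJ' x⟩ :=
          congrArg ψ (Subtype.ext ht)
        show (χ (IwAux.bdec p c hJ' hB' ((b : ↥Jsub) * x)) : ℂ) * ψ _ = _
        rw [hb, _root_.map_mul, Units.val_mul, hψ]
        ring
      refine ⟨⟨_, hmem⟩, ?_⟩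
      funext t
      show (χ (IwAux.bdec p c hJ' hB' (IwAux.vT p c hJ' t)) : ℂ) * ψ _ = ψ t
      rw [IwAux.bdec_vT p c hJ' hB' t, _root_.map_one, Units.val_one, one_mul]
      exact congrArg ψ (Subtype.ext (IwAux.tJ_vT p c hJ' t))
    rw [dimC, (LinearEquiv.ofBijective E ⟨hinj, hsurj⟩).finrank_eq, Module.finrank_pi,
      ← Nat.card_eq_fintype_card, IwAux.card_pR p c hc]
  · -- the averaging identity
    intro f hf
    have hfP : ∀ (b : ↥(B.subgroupOf Jsub)) (x : ↥Jsub),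
        f (↑b * x) = (χ b : ℂ) * f x := hf
    set F : ↥Jsub → ℂ := avgMap (rtRep ↥Jsub ℂ) (U.subgroupOf Jsub) f with hFdef
    have hFinv : ∀ (x : ↥Jsub) (u : ↥(U.subgroupOf Jsub)), F (x * ↑u) = F x :=
      fun x u => avg_right_inv _ f x u
    have hFeq : ∀ (b : ↥(B.subgroupOf Jsub)) (x : ↥Jsub),
        F (↑b * x) = (χ b : ℂ) * F x :=
      fun b x => avg_left_equiv _ f _ _ (fun y => hfP b y) x
    set G2 : ↥Jsub → ℂ := avgMap (rtRep ↥Jsub ℂ) (U.subgroupOf Jsub)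
      (avgMap (rtRep ↥Jsub ℂ) (V.subgroupOf Jsub) F) with hGdef
    have hG2inv : ∀ (x : ↥Jsub) (u : ↥(U.subgroupOf Jsub)), G2 (x * ↑u) = G2 x :=
      fun x u => avg_right_inv _ _ x u
    have hG2eq : ∀ (b : ↥(B.subgroupOf Jsub)) (x : ↥Jsub),
        G2 (↑b * x) = (χ b : ℂ) * G2 x :=
      fun b x => avg_left_equiv _ _ _ _
        (fun y => avg_left_equiv _ _ _ _ (fun z => hFeq b z) y) x
    have hvanish : ∀ (g : ↥Jsub → ℂ),
        (∀ (b : ↥(B.subgroupOf Jsub)) (x : ↥Jsub), g (↑b * x) = (χ b : ℂ) * g x) →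
        (∀ (x : ↥Jsub) (u : ↥(U.subgroupOf Jsub)), g (x * ↑u) = g x) →
        ∀ t : {t : ZMod (p ^ c) // ∃ y, t = (p : ZMod (p ^ c)) * y},
          t.1 ≠ 0 → g (IwAux.vT p c hJ' t) = 0 := by
      intro g hgE hgU t ht0
      obtain ⟨x, hxker, hρx⟩ := hρ
      obtain ⟨w, hw⟩ := IwAux.ker_unitsMap p c x hxker
      obtain ⟨b₀, hb₀⟩ := IwAux.exists_mul_eq_ppow p c ht0
      obtain ⟨y, hy⟩ := t.2
      set bb : ZMod (p ^ c) := -(b₀ * w) with hbbdef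
      have hsb : t.1 * bb = -((p : ZMod (p ^ c)) ^ (c - 1) * w) := by
        rw [hbbdef, mul_neg, ← mul_assoc, hb₀]
      have hppow : (p : ZMod (p ^ c)) * (p : ZMod (p ^ c)) ^ (c - 1) = 0 := by
        have h1 : (p : ZMod (p ^ c)) * (p : ZMod (p ^ c)) ^ (c - 1)
            = (p : ZMod (p ^ c)) ^ (c - 1 + 1) := by
          rw [pow_succ]
          ring
        rw [h1, Nat.sub_add_cancel hc, IwAux.pc_zero]
      have hs2b : t.1 * (t.1 * bb) = 0 := by
        rw [hsb, hy]
        linear_combination (-(y * w)) * hppow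
      have hunit : IsUnit (t.1 * bb + 1) := by
        rw [hy, mul_assoc, add_comm]
        exact IwAux.isUnit_one_add_p_mul p c _
      have humU : IwAux.umat bb ∈ U := (hUmem _).mpr ⟨bb, rfl⟩
      set uu : ↥(U.subgroupOf Jsub) :=
        ⟨⟨IwAux.umat bb, hUJ humU⟩, (Subgroup.mem_subgroupOf).mpr humU⟩ with huu
      set m : ↥Jsub := IwAux.vT p c hJ' t * ↑uu with hm
      have hmcoe : (↑m : Matrix.SpecialLinearGroup (Fin 2) (ZMod (p ^ c)))
          = IwAux.lmat t.1 * IwAux.umat bb := rfl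
      have hm10 : ((↑m : Matrix.SpecialLinearGroup (Fin 2) (ZMod (p ^ c)))
          : Matrix (Fin 2) (Fin 2) (ZMod (p ^ c))) 1 0 = t.1 := by
        rw [hmcoe, IwAux.mul_entry]; simp
      have hm11 : ((↑m : Matrix.SpecialLinearGroup (Fin 2) (ZMod (p ^ c)))
          : Matrix (Fin 2) (Fin 2) (ZMod (p ^ c))) 1 1 = t.1 * bb + 1 := by
        rw [hmcoe, IwAux.mul_entry]; simp
      have hm00 : ((↑m : Matrix.SpecialLinearGroup (Fin 2) (ZMod (p ^ c)))
          : Matrix (Fin 2) (Fin 2) (ZMod (p ^ c))) 0 0 = 1 := by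
        rw [hmcoe, IwAux.mul_entry]; simp
      have hm01 : ((↑m : Matrix.SpecialLinearGroup (Fin 2) (ZMod (p ^ c)))
          : Matrix (Fin 2) (Fin 2) (ZMod (p ^ c))) 0 1 = bb := by
        rw [hmcoe, IwAux.mul_entry]; simp
      have htJm : IwAux.tJ p c Jsub m = t.1 := by
        rw [IwAux.tJ, hm10, hm11]
        have hsum : t.1 * (t.1 * bb + 1) = t.1 := by linear_combination hs2b
        have h2 : t.1 * Ring.inverse (t.1 * bb + 1)
            = (t.1 * (t.1 * bb + 1)) * Ring.inverse (t.1 * bb + 1) := by rw [hsum]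
        rw [h2, mul_assoc, Ring.mul_inverse_cancel _ hunit, mul_one]
      have hvJm : IwAux.vJ p c hJ' m = IwAux.vT p c hJ' t := by
        apply Subtype.ext
        show IwAux.lmat (IwAux.tJ p c Jsub m) = IwAux.lmat t.1
        rw [htJm]
      have hbdm : (↑(↑(IwAux.bdec p c hJ' hB' m) : ↥Jsub)
            : Matrix.SpecialLinearGroup (Fin 2) (ZMod (p ^ c)))
          = (↑m : Matrix.SpecialLinearGroup (Fin 2) (ZMod (p ^ c)))
            * IwAux.lmat (-t.1) := by
        show (↑(m * (IwAux.vJ p c hJ' m)⁻¹ : ↥Jsub)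
            : Matrix.SpecialLinearGroup (Fin 2) (ZMod (p ^ c))) = _
        rw [hvJm]
        push_cast
        rw [show ((IwAux.vT p c hJ' t : ↥Jsub)
            : Matrix.SpecialLinearGroup (Fin 2) (ZMod (p ^ c)))
          = IwAux.lmat t.1 from rfl, IwAux.lmat_inv]
      have hb00 : ((↑(↑(IwAux.bdec p c hJ' hB' m) : ↥Jsub)
            : Matrix.SpecialLinearGroup (Fin 2) (ZMod (p ^ c)))
          : Matrix (Fin 2) (Fin 2) (ZMod (p ^ c))) 0 0 = (x : ZMod (p ^ c)) := by
        rw [hbdm, IwAux.mul_entry, hm00, hm01]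
        have e1 : (↑(IwAux.lmat (-t.1))
            : Matrix (Fin 2) (Fin 2) (ZMod (p ^ c))) 0 0 = 1 := by simp
        have e2 : (↑(IwAux.lmat (-t.1))
            : Matrix (Fin 2) (Fin 2) (ZMod (p ^ c))) 1 0 = -t.1 := by simp
        rw [e1, e2, hw]
        linear_combination -hsb
      have hχm : (χ (IwAux.bdec p c hJ' hB' m) : ℂ) = (ρ x : ℂ) := by
        rw [hχval _ x hb00]
      have heq : g (IwAux.vT p c hJ' t) = (ρ x : ℂ) * g (IwAux.vT p c hJ' t) := by
        calc g (IwAux.vT p c hJ' t) = g m := (hgU _ uu).symm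
          _ = (χ (IwAux.bdec p c hJ' hB' m) : ℂ) * g (IwAux.vJ p c hJ' m) :=
            heval g hgE m
          _ = (ρ x : ℂ) * g (IwAux.vT p c hJ' t) := by rw [hχm, hvJm]
      have hρx1 : (ρ x : ℂ) ≠ 1 := fun hh => hρx (Units.ext hh)
      exact eq_zero_of_self_eq_mul heq hρx1
    have key1 : G2 1 = ((p : ℂ) ^ ((1 : ℤ) - (c : ℤ))) * F 1 := by
      letI instV : Fintype ↥(V.subgroupOf Jsub) := Fintype.ofFinite _
      letI instU : Fintype ↥(U.subgroupOf Jsub) := Fintype.ofFinite _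
      have hr : ((p : ℂ) ^ ((1 : ℤ) - (c : ℤ))) = ((p ^ (c - 1) : ℕ) : ℂ)⁻¹ := by
        have hpc : ((1 : ℤ) - (c : ℤ)) = -((c - 1 : ℕ) : ℤ) := by
          rw [Nat.cast_sub hc]; ring
        rw [hpc, _root_.zpow_neg, zpow_natCast, Nat.cast_pow]
      rw [hGdef, avgMap_rtRep_apply]
      have hstep : ∀ u : ↥(U.subgroupOf Jsub),
          avgMap (rtRep ↥Jsub ℂ) (V.subgroupOf Jsub) F (1 * ↑u)
            = (Nat.card ↥(V.subgroupOf Jsub) : ℂ)⁻¹ * F 1 := by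
        intro u
        rw [one_mul, avgMap_rtRep_apply]
        congr 1
        have hUB : ∀ v : ↥(V.subgroupOf Jsub), F ((↑u : ↥Jsub) * ↑v) = F ↑v := by
          intro v
          have h1 := hFeq ⟨↑u, hUinB u⟩ ↑v
          rw [hχU u, one_mul] at h1
          exact h1
        rw [Finset.sum_congr rfl (fun v _ => hUB v)]
        have hz : ∀ v : ↥(V.subgroupOf Jsub), v ≠ 1 → F ↑v = 0 := by
          intro v hv1
          obtain ⟨c', hc'p, hmat⟩ := (hVmem _).mp ((Subgroup.mem_subgroupOf).mp v.2)
          have hvT : (↑v : ↥Jsub) = IwAux.vT p c hJ' ⟨c', hc'p⟩ := by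
            apply Subtype.ext; apply Subtype.ext; rw [hmat]; rfl
          have hc0 : c' ≠ 0 := by
            intro h0
            apply hv1
            apply Subtype.ext; apply Subtype.ext; apply Subtype.ext
            rw [hmat, h0]
            simp [Matrix.one_fin_two]
          rw [hvT]
          exact hvanish F hFeq hFinv ⟨c', hc'p⟩ hc0
        rw [Fintype.sum_eq_single (1 : ↥(V.subgroupOf Jsub)) hz]
        rw [OneMemClass.coe_one]
      rw [Finset.sum_congr rfl (fun u _ => hstep u)]
      rw [Finset.sum_const, Finset.card_univ, nsmul_eq_mul,
        ← Nat.card_eq_fintype_card (α := ↥(U.subgroupOf Jsub))]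
      have hcU : (Nat.card ↥(U.subgroupOf Jsub) : ℂ) ≠ 0 :=
        Nat.cast_ne_zero.mpr Nat.card_pos.ne'
      rw [inv_mul_cancel_left₀ hcU, hVcard, hr]
    have key : ∀ t : {t : ZMod (p ^ c) // ∃ y, t = (p : ZMod (p ^ c)) * y},
        G2 (IwAux.vT p c hJ' t)
          = ((p : ℂ) ^ ((1 : ℤ) - (c : ℤ))) * F (IwAux.vT p c hJ' t) := by
      intro t
      by_cases ht : t.1 = 0
      · have h1 : IwAux.vT p c hJ' t = 1 := by
          apply Subtype.ext
          apply Subtype.ext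
          show (IwAux.lmat t.1 : Matrix (Fin 2) (Fin 2) (ZMod (p ^ c))) = _
          rw [IwAux.lmat_coe, ht]
          rw [show ((((1 : ↥Jsub) : Matrix.SpecialLinearGroup (Fin 2) (ZMod (p ^ c))))
              : Matrix (Fin 2) (Fin 2) (ZMod (p ^ c))) = 1 from rfl]
          rw [Matrix.one_fin_two]
        rw [h1]
        exact key1
      · rw [hvanish G2 hG2eq hG2inv t ht, hvanish F hFeq hFinv t ht, mul_zero]
    funext j
    rw [Pi.smul_apply, smul_eq_mul, heval G2 hG2eq j, heval F hFeq j]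
    have hk : G2 (IwAux.vJ p c hJ' j)
        = ((p : ℂ) ^ ((1 : ℤ) - (c : ℤ))) * F (IwAux.vJ p c hJ' j) :=
      key ⟨IwAux.tJ p c Jsub j, IwAux.tJ_mem p c hJ' j⟩
    rw [hk]
    ring


end Statement12


end Parahoric
end
end
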